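/- arXiv:2501.18260 — 6 statements merged into one kernel-verified Lean document; each statement's English description precedes it below -/
import Mathlib

section
/- Let A be a superalgebra over an integral domain R of characteristic ≠ 2, finitely generated projective as an R-module, equipped with an even R-linear map t : A → R vanishing on the odd part, satisfying t(xy) = t(yx) for all x, y ∈ A, and such that a ↦ t(−·a) is an (A,A)-superbimodule isomorphism A ≅ Hom_R(A, R). Then the map z ↦ t(−·z) restricts to an isomorphism from the center Z(A) onto Hom_R(A/[A,A], R), where [A,A] is the R-span of all commutators xy − yx. -/
/-- If a superalgebra `A` over an integral domain `R` of characteristic `≠ 2`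
(finitely generated projective as an `R`-module) carries an even `R`-linear
form `t` which vanishes on the odd part, is a trace (`t (x y) = t (y x)`), and
induces an isomorphism `A ≅ Hom_R(A, R)` via `a ↦ t (- * a)`, then `z ↦ t (- * z)`
restricts to an isomorphism from the center `Z(A)` onto the dual of the
cocenter `A / [A, A]`. -/
theorem center_dual_of_cocenter_of_symmetric
    (R : Type*) [CommRing R] [IsDomain R] (hchar : (2 : R) ≠ 0)
    (A : Type*) [Ring A] [Algebra R A] [Module.Finite R A] [Module.Projective R A]
    (𝒜 : ZMod 2 → Submodule R A) [GradedAlgebra 𝒜]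
    (t : A →ₗ[R] R)
    (hodd : ∀ x ∈ 𝒜 1, t x = 0)
    (htr : ∀ x y : A, t (x * y) = t (y * x))
    (hiso : Function.Bijective fun a : A => t ∘ₗ LinearMap.mulRight R a) :
    ∃ e : Subalgebra.center R A ≃ₗ[R]
        Module.Dual R (A ⧸ Submodule.span R {u : A | ∃ x y : A, u = x * y - y * x}),
      ∀ (z : Subalgebra.center R A) (a : A),
        e z (Submodule.Quotient.mk a) = t (a * (z : A)) := by
  classical
  set S : Submodule R A := Submodule.span R {u : A | ∃ x y : A, u = x * y - y * x} with hS
  set φ : A → (A →ₗ[R] R) := fun a => t ∘ₗ LinearMap.mulRight R a with hφ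
  have hφapp : ∀ a u : A, φ a u = t (u * a) := fun a u => rfl
  -- vanishing of φ z on S for central z
  have hvan : ∀ z : A, (∀ b : A, b * z = z * b) → ∀ u ∈ S, φ z u = 0 := by
    intro z hz u hu
    induction hu using Submodule.span_induction with
    | mem u hu =>
      obtain ⟨x, y, rfl⟩ := hu
      have h1 : t (x * y * z) = t (y * x * z) := by
        calc t (x * y * z) = t (x * (y * z)) := by rw [mul_assoc]
          _ = t ((y * z) * x) := htr _ _
          _ = t (y * (z * x)) := by rw [mul_assoc]
          _ = t (y * (x * z)) := by rw [hz x]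
          _ = t (y * x * z) := by rw [mul_assoc]
      simp only [hφapp, sub_mul, map_sub, h1, sub_self]
    | zero => simp
    | add u v _ _ hu hv => simp [map_add, hu, hv]
    | smul r u _ hu => simp [map_smul, hu]
  -- the linear map from the center to the dual of the cocenter
  have hzc : ∀ z : Subalgebra.center R A, ∀ b : A, b * (z : A) = (z : A) * b := by
    intro z b
    exact (Subalgebra.mem_center_iff.mp z.2 b)
  let T : Subalgebra.center R A →ₗ[R] Module.Dual R (A ⧸ S) :=
    { toFun := fun z => S.liftQ (φ (z : A)) (fun u hu => hvan (z : A) (hzc z) u hu)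
      map_add' := by
        intro z w
        apply LinearMap.ext
        intro q
        obtain ⟨u, rfl⟩ := Submodule.Quotient.mk_surjective S q
        simp [Submodule.liftQ_apply, hφapp, mul_add]
        rfl
      map_smul' := by
        intro r z
        apply LinearMap.ext
        intro q
        obtain ⟨u, rfl⟩ := Submodule.Quotient.mk_surjective S q
        simp [Submodule.liftQ_apply, hφapp, mul_smul_comm]
        exact Or.inl rfl }
  have hinj : Function.Injective T := by
    rw [injective_iff_map_eq_zero]
    intro z hz0
    have : φ (z : A) = 0 := by
      apply LinearMap.ext
      intro u
      have := congrArg (fun f : Module.Dual R (A ⧸ S) => f (Submodule.Quotient.mk u)) hz0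
      exact this
    have : (z : A) = 0 := by
      have h0 : φ (0 : A) = 0 := by
        apply LinearMap.ext; intro u; simp [hφapp]
      exact hiso.1 (by rw [← hφ] at *; exact this.trans h0.symm)
    exact Subtype.ext this
  have hsurj : Function.Surjective T := by
    intro g
    obtain ⟨a, ha⟩ := hiso.2 (g ∘ₗ S.mkQ)
    have haapp : ∀ u : A, t (u * a) = g (Submodule.Quotient.mk u) := by
      intro u
      exact congrArg (fun f : A →ₗ[R] R => f u) ha
    have hacen : a ∈ Subalgebra.center R A := by
      rw [Subalgebra.mem_center_iff]
      intro b
      have key : φ (b * a - a * b) = 0 := by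
        apply LinearMap.ext
        intro x
        have h1 : t (x * (b * a)) = t ((x * b) * a) := by rw [mul_assoc]
        have h2 : t (x * (a * b)) = t ((b * x) * a) := by
          calc t (x * (a * b)) = t ((a * b) * x) := htr _ _
            _ = t (a * (b * x)) := by rw [mul_assoc]
            _ = t ((b * x) * a) := htr _ _
        have hcomm : (x * b - b * x) * a = x * b * a - b * x * a := sub_mul _ _ _
        have hmem : (x * b - b * x) ∈ S := Submodule.subset_span ⟨x, b, rfl⟩
        have hval : t ((x * b - b * x) * a) = 0 := by
          have := haapp (x * b - b * x)
          rw [this]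
          have : Submodule.Quotient.mk (p := S) (x * b - b * x) = 0 :=
            (Submodule.Quotient.mk_eq_zero S).mpr hmem
          rw [this, map_zero]
        rw [hcomm, map_sub] at hval
        simp only [hφapp, mul_sub, map_sub, LinearMap.zero_apply, h1, h2]
        exact hval
      have hφ0 : φ (0 : A) = 0 := by apply LinearMap.ext; intro u; simp [hφapp]
      exact sub_eq_zero.mp (hiso.1 (key.trans hφ0.symm))
    refine ⟨⟨a, hacen⟩, ?_⟩
    apply LinearMap.ext
    intro q
    obtain ⟨u, rfl⟩ := Submodule.Quotient.mk_surjective S q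
    exact haapp u
  refine ⟨LinearEquiv.ofBijective T ⟨hinj, hsurj⟩, ?_⟩
  intro z a
  simp [T, LinearEquiv.ofBijective_apply, Submodule.liftQ_apply, hφapp]
  rfl
end

section
/- Let A be a superalgebra over an integral domain R of characteristic ≠ 2, finitely generated projective as an R-module, equipped with an even R-linear map t : A → R vanishing on the odd part, satisfying t(xy) = (−1)^{|x||y|} t(yx) for all homogeneous x, y ∈ A, and such that a ↦ t(−·a) is an (A,A)-superbimodule isomorphism A ≅ Hom_R(A, R). Then the map z ↦ t(−·z) restricts to an isomorphism from the supercenter SupZ(A) onto Hom_R(A/[A,A]⁻, R), where [A,A]⁻ is the R-span of all supercommutators xy − (−1)^{|x||y|} yx. -/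
/-- If a superalgebra `A` over an integral domain `R` of characteristic `≠ 2`
(finitely generated projective as an `R`-module) carries an even `R`-linear
form `t` vanishing on the odd part, which is a supertrace
(`t (x y) = (-1)^{|x||y|} t (y x)` for homogeneous `x, y`) and induces an
isomorphism `A ≅ Hom_R(A, R)` via `a ↦ t (- * a)`, then `z ↦ t (- * z)`
restricts to an isomorphism from the supercenter `SupZ(A)` onto the dual of the
supercocenter `A / [A, A]⁻`. -/
theorem supercenter_dual_of_supercocenter_of_supersymmetric
    (R : Type*) [CommRing R] [IsDomain R] (hchar : (2 : R) ≠ 0)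
    (A : Type*) [Ring A] [Algebra R A] [Module.Finite R A] [Module.Projective R A]
    (𝒜 : ZMod 2 → Submodule R A) [GradedAlgebra 𝒜]
    (t : A →ₗ[R] R)
    (hodd : ∀ x ∈ 𝒜 1, t x = 0)
    (htr : ∀ (i j : ZMod 2), ∀ x ∈ 𝒜 i, ∀ y ∈ 𝒜 j,
      t (x * y) = (-1 : R) ^ (i.val * j.val) * t (y * x))
    (hiso : Function.Bijective fun a : A => t ∘ₗ LinearMap.mulRight R a) :
    ∃ e : (Submodule.span R {x : A | ∃ i : ZMod 2, x ∈ 𝒜 i ∧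
            ∀ (j : ZMod 2), ∀ y ∈ 𝒜 j, x * y = ((-1 : R) ^ (i.val * j.val)) • (y * x)}) ≃ₗ[R]
        Module.Dual R (A ⧸ Submodule.span R {u : A | ∃ (i j : ZMod 2) (x y : A),
            x ∈ 𝒜 i ∧ y ∈ 𝒜 j ∧ u = x * y - ((-1 : R) ^ (i.val * j.val)) • (y * x)}),
      ∀ z a, e z (Submodule.Quotient.mk a) = t (a * (z : A)) := by
  classical
  set genS : Set A := {x : A | ∃ i : ZMod 2, x ∈ 𝒜 i ∧
      ∀ (j : ZMod 2), ∀ y ∈ 𝒜 j, x * y = ((-1 : R) ^ (i.val * j.val)) • (y * x)} with hgenS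
  set genC : Set A := {u : A | ∃ (i j : ZMod 2) (x y : A),
      x ∈ 𝒜 i ∧ y ∈ 𝒜 j ∧ u = x * y - ((-1 : R) ^ (i.val * j.val)) • (y * x)} with hgenC
  set S := Submodule.span R genS with hS
  set C := Submodule.span R genC with hC
  -- sign computations
  have sgn1 : ∀ a b c : ℕ, a < 2 → b < 2 → c < 2 →
      ((-1 : R) ^ (a * b)) * (((-1 : R) ^ (b * ((a + c) % 2))) * ((-1 : R) ^ (c * b))) = 1 := by
    intro a b c ha hb hc
    interval_cases a <;> interval_cases b <;> interval_cases c <;> norm_num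
  have sgn2 : ∀ a b c : ℕ, a < 2 → b < 2 → c < 2 →
      ((-1 : R) ^ (((a + b) % 2) * c)) * ((-1 : R) ^ (a * c)) = (-1 : R) ^ (b * c) := by
    intro a b c ha hb hc
    interval_cases a <;> interval_cases b <;> interval_cases c <;> norm_num
  have sq : ∀ a b : ℕ, ((-1 : R) ^ (a * b)) * ((-1 : R) ^ (a * b)) = 1 := by
    intro a b; rw [← pow_add]; exact Even.neg_one_pow ⟨a * b, rfl⟩
  -- vanishing on generators extends to the span
  have hlin : ∀ w : A, (∀ u ∈ genC, t (u * w) = 0) → ∀ u ∈ C, t (u * w) = 0 := by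
    intro w hgen u hu
    induction hu using Submodule.span_induction with
    | mem u hu => exact hgen u hu
    | zero => simp
    | add u v _ _ hu hv => rw [add_mul, map_add, hu, hv, add_zero]
    | smul r u _ hu => rw [smul_mul_assoc, map_smul, hu, smul_zero]
  -- forward direction: supercentral elements annihilate supercommutators
  have hfwd : ∀ z ∈ S, ∀ u ∈ C, t (u * z) = 0 := by
    intro z hz
    induction hz using Submodule.span_induction with
    | mem z hzS =>
      obtain ⟨k, hzk, hzc⟩ := hzS
      refine hlin z ?_
      rintro u ⟨i, j, x, y, hx, hy, rfl⟩
      have e1 : t (y * (x * z)) = (-1 : R) ^ (j.val * (i + k).val) * t ((x * z) * y) :=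
        htr j (i + k) y hy (x * z) (SetLike.mul_mem_graded hx hzk)
      have e2 : (x * z) * y = ((-1 : R) ^ (k.val * j.val)) • (x * (y * z)) := by
        rw [mul_assoc, hzc j y hy, mul_smul_comm]
      have key : ((-1 : R) ^ (i.val * j.val)) *
          (((-1 : R) ^ (j.val * (i + k).val)) * ((-1 : R) ^ (k.val * j.val))) = 1 := by
        have h := sgn1 i.val j.val k.val (ZMod.val_lt i) (ZMod.val_lt j) (ZMod.val_lt k)
        rwa [← ZMod.val_add i k] at h
      rw [sub_mul, smul_mul_assoc, map_sub, map_smul, smul_eq_mul, mul_assoc y x z, e1, e2,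
        map_smul, smul_eq_mul, mul_assoc x y z]
      linear_combination (-(t (x * (y * z)))) * key
    | zero => intro u hu; simp
    | add z w _ _ hz hw => intro u hu; rw [mul_add, map_add, hz u hu, hw u hu, add_zero]
    | smul r z _ hz => intro u hu; rw [mul_smul_comm, map_smul, hz u hu, smul_zero]
  -- converse: homogeneous elements annihilating supercommutators are supercentral
  have hcen : ∀ (m : ZMod 2) (z : A), z ∈ 𝒜 m → (∀ u ∈ genC, t (u * z) = 0) →
      ∀ (j : ZMod 2), ∀ y ∈ 𝒜 j, z * y = ((-1 : R) ^ (m.val * j.val)) • (y * z) := by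
    intro m z hzm hz j y hy
    have hhom : ∀ (i : ZMod 2), ∀ a ∈ 𝒜 i,
        t (a * (z * y - ((-1 : R) ^ (m.val * j.val)) • (y * z))) = 0 := by
      intro i a ha
      have hu : (a * y - ((-1 : R) ^ (i.val * j.val)) • (y * a)) ∈ genC :=
        ⟨i, j, a, y, ha, hy, rfl⟩
      have h2 := hz _ hu
      rw [sub_mul, smul_mul_assoc, map_sub, map_smul, smul_eq_mul, sub_eq_zero] at h2
      have h2' : t ((y * a) * z) = ((-1 : R) ^ (i.val * j.val)) * t ((a * y) * z) := by
        rw [h2, ← mul_assoc, sq, one_mul]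
      have e1 : t ((a * z) * y) = (-1 : R) ^ ((i + m).val * j.val) * t (y * (a * z)) :=
        htr (i + m) j (a * z) (SetLike.mul_mem_graded ha hzm) y hy
      have key : ((-1 : R) ^ ((i + m).val * j.val)) * ((-1 : R) ^ (i.val * j.val)) =
          (-1 : R) ^ (m.val * j.val) := by
        have h := sgn2 i.val m.val j.val (ZMod.val_lt i) (ZMod.val_lt m) (ZMod.val_lt j)
        rwa [← ZMod.val_add i m] at h
      rw [mul_sub, mul_smul_comm, map_sub, map_smul, smul_eq_mul, ← mul_assoc a z y, e1,
        ← mul_assoc y a z, h2', mul_assoc a y z]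
      linear_combination (t (a * (y * z))) * key
    have hT : (fun a : A => t ∘ₗ LinearMap.mulRight R a)
        (z * y - ((-1 : R) ^ (m.val * j.val)) • (y * z)) =
        (fun a : A => t ∘ₗ LinearMap.mulRight R a) 0 := by
      ext a
      simp only [LinearMap.coe_comp, Function.comp_apply, LinearMap.mulRight_apply, mul_zero,
        map_zero]
      conv_lhs => rw [← DirectSum.sum_support_decompose 𝒜 a]
      rw [Finset.sum_mul, map_sum]
      exact Finset.sum_eq_zero fun i _ => hhom i _ (SetLike.coe_mem _)
    have h0 := hiso.injective hT
    exact sub_eq_zero.mp h0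
  -- annihilating supercommutators implies membership in the supercenter
  have hsplit : ∀ z : A, (∀ u ∈ C, t (u * z) = 0) → z ∈ S := by
    intro z hzC
    rw [← DirectSum.sum_support_decompose 𝒜 z]
    refine Submodule.sum_mem _ fun m _ => Submodule.subset_span ?_
    refine ⟨m, SetLike.coe_mem _, ?_⟩
    refine hcen m _ (SetLike.coe_mem _) ?_
    rintro u ⟨i, j, x, y, hx, hy, rfl⟩
    have hgmem : (x * y - ((-1 : R) ^ (i.val * j.val)) • (y * x)) ∈ 𝒜 (i + j) :=
      Submodule.sub_mem _ (SetLike.mul_mem_graded hx hy)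
        (Submodule.smul_mem _ _ ((add_comm j i) ▸ SetLike.mul_mem_graded hy hx))
    have hone : ∀ c d : ZMod 2, d ≠ c → c + d = 1 := by decide
    have hvan : ∀ k : ZMod 2, k ≠ i + j →
        t ((x * y - ((-1 : R) ^ (i.val * j.val)) • (y * x)) *
          (DirectSum.decompose 𝒜 z k : A)) = 0 := by
      intro k hk
      exact hodd _ ((hone (i + j) k hk) ▸
        SetLike.mul_mem_graded hgmem (SetLike.coe_mem (DirectSum.decompose 𝒜 z k)))
    by_cases hm : m = i + j
    · subst hm
      have hsum : ∑ k ∈ (DirectSum.decompose 𝒜 z).support,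
          t ((x * y - ((-1 : R) ^ (i.val * j.val)) • (y * x)) *
            (DirectSum.decompose 𝒜 z k : A)) = 0 := by
        rw [← map_sum, ← Finset.mul_sum, DirectSum.sum_support_decompose]
        exact hzC _ (Submodule.subset_span ⟨i, j, x, y, hx, hy, rfl⟩)
      by_cases hmem : (i + j) ∈ (DirectSum.decompose 𝒜 z).support
      · have hsingle := Finset.sum_eq_single_of_mem (i + j) hmem
          (fun k _ hk => hvan k hk)
        rw [← hsingle]
        exact hsum
      · rw [DFinsupp.notMem_support_iff] at hmem
        rw [hmem, ZeroMemClass.coe_zero, mul_zero, map_zero]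
    · exact hvan m hm
  -- the linear map from the supercenter to the dual of the supercocenter
  have hker : ∀ z : S, C ≤ LinearMap.ker (t ∘ₗ LinearMap.mulRight R (z : A)) := by
    intro z u hu
    simpa using hfwd (z : A) z.2 u hu
  let φ : S →ₗ[R] Module.Dual R (A ⧸ C) :=
    { toFun := fun z => C.liftQ (t ∘ₗ LinearMap.mulRight R (z : A)) (hker z)
      map_add' := by
        intro z w
        apply Submodule.linearMap_qext
        ext a
        simp [mul_add]
      map_smul' := by
        intro r z
        apply Submodule.linearMap_qext
        ext a
        simp [mul_smul_comm] }
  have hφ : ∀ (z : S) (a : A), φ z (Submodule.Quotient.mk a) = t (a * (z : A)) := by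
    intro z a
    simp [φ, Submodule.liftQ_apply]
  have hinj : Function.Injective φ := by
    intro z w h
    have hTzw : (fun a : A => t ∘ₗ LinearMap.mulRight R a) (z : A) =
        (fun a : A => t ∘ₗ LinearMap.mulRight R a) (w : A) := by
      ext a
      have h' := congrArg (fun f : Module.Dual R (A ⧸ C) => f (Submodule.Quotient.mk a)) h
      simpa [hφ] using h'
    exact Subtype.ext (hiso.injective hTzw)
  have hsurj : Function.Surjective φ := by
    intro f
    obtain ⟨z, hzT⟩ := hiso.surjective (f ∘ₗ C.mkQ)
    have hzC : ∀ u ∈ C, t (u * z) = 0 := by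
      intro u hu
      have h' := congrArg (fun g : A →ₗ[R] R => g u) hzT
      simp only [LinearMap.coe_comp, Function.comp_apply, LinearMap.mulRight_apply,
        Submodule.mkQ_apply] at h'
      rw [h', (Submodule.Quotient.mk_eq_zero C).mpr hu, map_zero]
    refine ⟨⟨z, hsplit z hzC⟩, ?_⟩
    apply Submodule.linearMap_qext
    ext a
    have h' := congrArg (fun g : A →ₗ[R] R => g a) hzT
    simpa [hφ] using h'
  refine ⟨LinearEquiv.ofBijective φ ⟨hinj, hsurj⟩, ?_⟩
  intro z a
  exact hφ z a
end

section
/- Let F be an algebraically closed field of characteristic ≠ 2 and Q_n ⊂ M_{n,n} the queer superalgebra consisting of block matrices [[A, B], [−B, A]] with A, B ∈ M_n(F), n ≥ 1. Then the even parts of Tr(Q_n) and Z(Q_n) are 1-dimensional over F, while the even part of SupTr(Q_n) is 0-dimensional. -/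
/-- The parity of an index of the superspace `F^{n|n}`, modelled on `Fin n ⊕ Fin n`. -/
def superParity (n : ℕ) : Fin n ⊕ Fin n → ZMod 2 := Sum.elim (fun _ => 0) (fun _ => 1)

/-- The degree-`d` homogeneous component of the matrix superalgebra `M_{n,n}(F)`. -/
def matGrade (F : Type*) [CommRing F] (n : ℕ) (d : ZMod 2) :
    Submodule F (Matrix (Fin n ⊕ Fin n) (Fin n ⊕ Fin n) F) where
  carrier := {M | ∀ i j, superParity n i + superParity n j ≠ d → M i j = 0}
  add_mem' := by
    intro a b ha hb i j h
    simp [Matrix.add_apply, ha i j h, hb i j h]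
  zero_mem' := by intro i j _; rfl
  smul_mem' := by
    intro r M hM i j h
    simp [Matrix.smul_apply, hM i j h]

/-- The queer superalgebra `Q_n ⊆ M_{n,n}(F)`, consisting of the block matrices
`[[A, B], [-B, A]]`, as a submodule of the matrix superalgebra. -/
def queer (F : Type*) [CommRing F] (n : ℕ) :
    Submodule F (Matrix (Fin n ⊕ Fin n) (Fin n ⊕ Fin n) F) where
  carrier := {M | (∀ i j : Fin n, M (Sum.inl i) (Sum.inl j) = M (Sum.inr i) (Sum.inr j)) ∧
    ∀ i j : Fin n, M (Sum.inl i) (Sum.inr j) = -M (Sum.inr i) (Sum.inl j)}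
  add_mem' := by
    intro a b ha hb
    refine ⟨fun i j => ?_, fun i j => ?_⟩
    · simp [Matrix.add_apply, ha.1 i j, hb.1 i j]
    · simp only [Matrix.add_apply, ha.2 i j, hb.2 i j]; ring
  zero_mem' := by
    refine ⟨fun i j => rfl, fun i j => ?_⟩
    simp [Matrix.zero_apply]
  smul_mem' := by
    intro r M hM
    refine ⟨fun i j => ?_, fun i j => ?_⟩
    · simp [Matrix.smul_apply, hM.1 i j]
    · simp [Matrix.smul_apply, hM.2 i j]

/-- The center of the queer superalgebra, as a submodule of `Q_n`. -/
def queerCenter (F : Type*) [CommRing F] (n : ℕ) : Submodule F (queer F n) where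
  carrier := {q | ∀ p : queer F n,
    (q : Matrix (Fin n ⊕ Fin n) (Fin n ⊕ Fin n) F) * (p : Matrix (Fin n ⊕ Fin n) (Fin n ⊕ Fin n) F)
      = (p : Matrix (Fin n ⊕ Fin n) (Fin n ⊕ Fin n) F) * q}
  add_mem' := by
    intro a b ha hb p
    push_cast
    simp [add_mul, mul_add, ha p, hb p]
  zero_mem' := by intro p; push_cast; simp
  smul_mem' := by
    intro r q hq p
    push_cast
    rw [Matrix.smul_mul, Matrix.mul_smul, hq p]

namespace QueerAux

open Matrix

variable {F : Type*} [Field F] {n : ℕ}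

/-- The linear embedding `A ↦ [[A,0],[0,A]]`. -/
def qE : Matrix (Fin n) (Fin n) F →ₗ[F] Matrix (Fin n ⊕ Fin n) (Fin n ⊕ Fin n) F where
  toFun A := Matrix.fromBlocks A 0 0 A
  map_add' A B := by ext (i | i) (j | j) <;> simp [Matrix.fromBlocks]
  map_smul' r A := by ext (i | i) (j | j) <;> simp [Matrix.fromBlocks]

/-- The map `B ↦ [[0,B],[-B,0]]`. -/
def qO (B : Matrix (Fin n) (Fin n) F) : Matrix (Fin n ⊕ Fin n) (Fin n ⊕ Fin n) F :=
  Matrix.fromBlocks 0 B (-B) 0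

lemma fromBlocks_mem_queer (A B : Matrix (Fin n) (Fin n) F) :
    Matrix.fromBlocks A B (-B) A ∈ queer F n := by
  refine ⟨fun i j => ?_, fun i j => ?_⟩ <;> simp [Matrix.fromBlocks]

lemma qE_mem_queer (A : Matrix (Fin n) (Fin n) F) : qE A ∈ queer F n := by
  have := fromBlocks_mem_queer A (0 : Matrix (Fin n) (Fin n) F)
  simpa [qE] using this

lemma qO_mem_queer (B : Matrix (Fin n) (Fin n) F) : qO B ∈ queer F n := by
  have := fromBlocks_mem_queer (0 : Matrix (Fin n) (Fin n) F) B
  simpa [qO] using this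

lemma qE_mem_grade (A : Matrix (Fin n) (Fin n) F) : qE A ∈ matGrade F n 0 := by
  rintro (i | i) (j | j) h
  · exact absurd rfl h
  · simp [qE, Matrix.fromBlocks]
  · simp [qE, Matrix.fromBlocks]
  · exact absurd rfl h

lemma qO_mem_grade (B : Matrix (Fin n) (Fin n) F) : qO B ∈ matGrade F n 1 := by
  rintro (i | i) (j | j) h
  · simp [qO, Matrix.fromBlocks]
  · exact absurd rfl h
  · exact absurd rfl h
  · simp [qO, Matrix.fromBlocks]

lemma qE_mul_qE (A B : Matrix (Fin n) (Fin n) F) : qE A * qE B = qE (A * B) := by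
  simp [qE, Matrix.fromBlocks_multiply]

lemma qO_mul_qO (A B : Matrix (Fin n) (Fin n) F) : qO A * qO B = qE (-(A * B)) := by
  simp [qO, qE, Matrix.fromBlocks_multiply]

end QueerAux

namespace QueerAux

variable {F : Type*} [Field F] {n : ℕ}

open Matrix

/-- Every element of the queer algebra is of block form `[[A,B],[-B,A]]`. -/
lemma queer_eq_fromBlocks {p : Matrix (Fin n ⊕ Fin n) (Fin n ⊕ Fin n) F}
    (hp : p ∈ queer F n) :
    p = Matrix.fromBlocks (Matrix.of fun i j => p (Sum.inl i) (Sum.inl j))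
      (Matrix.of fun i j => p (Sum.inl i) (Sum.inr j))
      (-(Matrix.of fun i j => p (Sum.inl i) (Sum.inr j)))
      (Matrix.of fun i j => p (Sum.inl i) (Sum.inl j)) := by
  ext (i | i) (j | j)
  · simp [Matrix.fromBlocks]
  · simp [Matrix.fromBlocks]
  · simp [Matrix.fromBlocks, hp.2 i j]
  · simp [Matrix.fromBlocks, hp.1 i j]

/-- An even element of the queer algebra is of the form `qE A`. -/
lemma even_queer_eq {p : Matrix (Fin n ⊕ Fin n) (Fin n ⊕ Fin n) F}
    (hp : p ∈ queer F n) (he : p ∈ matGrade F n 0) :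
    p = qE (Matrix.of fun i j => p (Sum.inl i) (Sum.inl j)) := by
  ext (i | i) (j | j)
  · simp [qE, Matrix.fromBlocks]
  · simpa [qE, Matrix.fromBlocks] using he (Sum.inl i) (Sum.inr j) (fun h => one_ne_zero h)
  · simpa [qE, Matrix.fromBlocks] using he (Sum.inr i) (Sum.inl j) (fun h => one_ne_zero h)
  · simpa [qE, Matrix.fromBlocks] using (hp.1 i j).symm

/-- The trace of the upper-left block, as a linear functional. -/
def blTrace : Matrix (Fin n ⊕ Fin n) (Fin n ⊕ Fin n) F →ₗ[F] F where
  toFun M := ∑ i : Fin n, M (Sum.inl i) (Sum.inl i)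
  map_add' M N := by simp [Finset.sum_add_distrib]
  map_smul' r M := by simp [Finset.mul_sum]

lemma blTrace_fromBlocks (A B C D : Matrix (Fin n) (Fin n) F) :
    blTrace (Matrix.fromBlocks A B C D) = Matrix.trace A := by
  simp [blTrace, Matrix.fromBlocks, Matrix.trace, Matrix.diag]

lemma blTrace_qE (A : Matrix (Fin n) (Fin n) F) : blTrace (qE A) = Matrix.trace A :=
  blTrace_fromBlocks A 0 0 A

/-- `blTrace` vanishes on commutators of queer elements. -/
lemma blTrace_comm {p q : Matrix (Fin n ⊕ Fin n) (Fin n ⊕ Fin n) F}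
    (hp : p ∈ queer F n) (hq : q ∈ queer F n) :
    blTrace (p * q - q * p) = 0 := by
  set A1 := Matrix.of fun i j => p (Sum.inl i) (Sum.inl j) with hA1
  set B1 := Matrix.of fun i j => p (Sum.inl i) (Sum.inr j) with hB1
  set A2 := Matrix.of fun i j => q (Sum.inl i) (Sum.inl j) with hA2
  set B2 := Matrix.of fun i j => q (Sum.inl i) (Sum.inr j) with hB2
  rw [map_sub, queer_eq_fromBlocks hp, queer_eq_fromBlocks hq, ← hA1, ← hB1, ← hA2, ← hB2,
    Matrix.fromBlocks_multiply, Matrix.fromBlocks_multiply, blTrace_fromBlocks,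
    blTrace_fromBlocks, Matrix.trace_add, Matrix.trace_add, Matrix.mul_neg, Matrix.mul_neg,
    Matrix.trace_neg, Matrix.trace_neg, Matrix.trace_mul_comm A1 A2, Matrix.trace_mul_comm B1 B2]
  ring

end QueerAux

namespace QueerAux

variable {F : Type*} [Field F] {n : ℕ}

open Matrix

lemma sum_stdBasisMatrix_diag (z : Fin n) (A : Matrix (Fin n) (Fin n) F) :
    ∑ i, Matrix.single z z (A i i) = Matrix.single z z (Matrix.trace A) := by
  ext a b
  simp only [Matrix.sum_apply, Matrix.single, Matrix.of_apply, Matrix.trace, Matrix.diag]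
  by_cases h : z = a ∧ z = b
  · simp [h]
  · simp [h]

lemma qE_traceZero_mem (W : Submodule F (Matrix (Fin n ⊕ Fin n) (Fin n ⊕ Fin n) F))
    (hW : ∀ X Y : Matrix (Fin n) (Fin n) F, qE (X * Y - Y * X) ∈ W)
    (hn : 1 ≤ n) (A : Matrix (Fin n) (Fin n) F) (hA : Matrix.trace A = 0) : qE A ∈ W := by
  set z : Fin n := ⟨0, hn⟩ with hz
  have h1 : ∀ (i j : Fin n) (c : F), i ≠ j → qE (Matrix.single i j c) ∈ W := by
    intro i j c hij
    have := hW (Matrix.single i j c) (Matrix.single j j 1)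
    rwa [Matrix.single_mul_single_same, Matrix.single_mul_single_of_ne (c := (1 : F)) j j i hij.symm c, mul_one,
      sub_zero] at this
  have h2 : ∀ (i : Fin n) (c : F), qE (Matrix.single i i c - Matrix.single z z c) ∈ W := by
    intro i c
    have := hW (Matrix.single i z c) (Matrix.single z i 1)
    rwa [Matrix.single_mul_single_same, Matrix.single_mul_single_same, mul_one, one_mul] at this
  have key : ∑ i : Fin n, ∑ j : Fin n,
      (if i = j then Matrix.single z z (A i j) else (0 : Matrix (Fin n) (Fin n) F))
      = Matrix.single z z (Matrix.trace A) := by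
    rw [← sum_stdBasisMatrix_diag z A]
    refine Finset.sum_congr rfl fun i _ => ?_
    simp [Finset.sum_ite_eq]
  have hrep : A = ∑ i : Fin n, ∑ j : Fin n,
      (Matrix.single i j (A i j) -
        if i = j then Matrix.single z z (A i j) else (0 : Matrix (Fin n) (Fin n) F)) := by
    have hsplit : ∑ i : Fin n, ∑ j : Fin n,
        (Matrix.single i j (A i j) -
          if i = j then Matrix.single z z (A i j) else (0 : Matrix (Fin n) (Fin n) F))
        = (∑ i : Fin n, ∑ j : Fin n, Matrix.single i j (A i j)) -
          ∑ i : Fin n, ∑ j : Fin n,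
            (if i = j then Matrix.single z z (A i j) else (0 : Matrix (Fin n) (Fin n) F)) := by
      rw [← Finset.sum_sub_distrib]
      refine Finset.sum_congr rfl fun i _ => ?_
      rw [Finset.sum_sub_distrib]
    rw [hsplit, key, hA, Matrix.single_zero, sub_zero, ← Matrix.matrix_eq_sum_single]
  rw [hrep, map_sum]
  refine Submodule.sum_mem W fun i _ => ?_
  rw [map_sum]
  refine Submodule.sum_mem W fun j _ => ?_
  by_cases hij : i = j
  · subst hij
    simpa only [if_pos rfl, if_pos trivial] using h2 i (A i i)
  · simpa only [if_neg hij, sub_zero] using h1 i j (A i j) hij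

end QueerAux


open QueerAux in
/-- For the queer superalgebra `Q_n` (`n ≥ 1`) over an algebraically closed field of
characteristic `≠ 2`, the even parts of the cocenter `Tr(Q_n)` and of the center
`Z(Q_n)` are `1`-dimensional, while the even part of the supercocenter
`SupTr(Q_n)` is `0`-dimensional. -/
theorem queer_superalgebra_cocenter_center_supercocenter_dims
    (F : Type*) [Field F] [IsAlgClosed F] (hchar : (2 : F) ≠ 0)
    (n : ℕ) (hn : 1 ≤ n) :
    Module.finrank F
        (((matGrade F n 0).comap (queer F n).subtype).map
          ((Submodule.span F {u : Matrix (Fin n ⊕ Fin n) (Fin n ⊕ Fin n) F |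
              ∃ p q, p ∈ queer F n ∧ q ∈ queer F n ∧ u = p * q - q * p}).comap
            (queer F n).subtype).mkQ) = 1 ∧
    Module.finrank F
        (queerCenter F n ⊓ (matGrade F n 0).comap (queer F n).subtype :
          Submodule F (queer F n)) = 1 ∧
    Module.finrank F
        (((matGrade F n 0).comap (queer F n).subtype).map
          ((Submodule.span F {u : Matrix (Fin n ⊕ Fin n) (Fin n ⊕ Fin n) F |
              ∃ (i j : ZMod 2) (p q : Matrix (Fin n ⊕ Fin n) (Fin n ⊕ Fin n) F),
                p ∈ queer F n ⊓ matGrade F n i ∧ q ∈ queer F n ⊓ matGrade F n j ∧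
                u = p * q - ((-1 : F) ^ (i.val * j.val)) • (q * p)}).comap
            (queer F n).subtype).mkQ) = 0 := by
  classical
  set z : Fin n := ⟨0, hn⟩ with hz
  have h1q : (1 : Matrix (Fin n ⊕ Fin n) (Fin n ⊕ Fin n) F) ∈ queer F n := by
    refine ⟨fun i j => ?_, fun i j => ?_⟩ <;> simp [Matrix.one_apply]
  have h1E : qE (1 : Matrix (Fin n) (Fin n) F)
      = (1 : Matrix (Fin n ⊕ Fin n) (Fin n ⊕ Fin n) F) := by
    show Matrix.fromBlocks 1 0 0 1 = 1
    exact Matrix.fromBlocks_one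
  have htrE : Matrix.trace (Matrix.single z z (1 : F)) = 1 := by
    simp [Matrix.trace, Matrix.diag, Matrix.single, Finset.sum_ite_eq]
  refine ⟨?_, ?_, ?_⟩
  · -- Part 1 : cocenter
    set S : Submodule F (Matrix (Fin n ⊕ Fin n) (Fin n ⊕ Fin n) F) :=
      Submodule.span F {u : Matrix (Fin n ⊕ Fin n) (Fin n ⊕ Fin n) F |
        ∃ p q, p ∈ queer F n ∧ q ∈ queer F n ∧ u = p * q - q * p} with hS
    have hWgen : ∀ X Y : Matrix (Fin n) (Fin n) F, qE (X * Y - Y * X) ∈ S := by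
      intro X Y
      rw [map_sub, ← qE_mul_qE, ← qE_mul_qE]
      exact Submodule.subset_span ⟨_, _, qE_mem_queer X, qE_mem_queer Y, rfl⟩
    have hSle : S ≤ LinearMap.ker (blTrace (F := F) (n := n)) := by
      rw [hS, Submodule.span_le]
      rintro u ⟨p, q, hp, hq, rfl⟩
      exact blTrace_comm hp hq
    set e : queer F n := ⟨qE (Matrix.single z z 1), qE_mem_queer _⟩ with he
    set π := ((S.comap (queer F n).subtype)).mkQ with hπ
    have heq : ((matGrade F n 0).comap (queer F n).subtype).map π = Submodule.span F {π e} := by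
      apply le_antisymm
      · rintro - ⟨x, hx, rfl⟩
        replace hx : (x : Matrix (Fin n ⊕ Fin n) (Fin n ⊕ Fin n) F) ∈ matGrade F n 0 := hx
        rw [Submodule.mem_span_singleton]
        refine ⟨blTrace (x : Matrix (Fin n ⊕ Fin n) (Fin n ⊕ Fin n) F), ?_⟩
        rw [← map_smul, hπ, Submodule.mkQ_apply, Submodule.mkQ_apply, Submodule.Quotient.eq,
          Submodule.mem_comap]
        set c := blTrace (x : Matrix (Fin n ⊕ Fin n) (Fin n ⊕ Fin n) F) with hc
        have hxE := even_queer_eq x.2 hx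
        set A := Matrix.of fun i j =>
          (x : Matrix (Fin n ⊕ Fin n) (Fin n ⊕ Fin n) F) (Sum.inl i) (Sum.inl j) with hA
        have hcoe : ((queer F n).subtype) ((c • e - x : queer F n))
            = c • qE (Matrix.single z z 1)
              - (x : Matrix (Fin n ⊕ Fin n) (Fin n ⊕ Fin n) F) := by
          simp [he]
        rw [hcoe, hxE, ← map_smul, ← map_sub]
        apply qE_traceZero_mem S hWgen hn
        have htrA : Matrix.trace A = c := by
          rw [hc]
          simp [blTrace, Matrix.trace, Matrix.diag, hA]
        rw [Matrix.trace_sub, Matrix.trace_smul, htrE, htrA, smul_eq_mul, mul_one, sub_self]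
      · rw [Submodule.span_le, Set.singleton_subset_iff]
        exact ⟨e, Submodule.mem_comap.mpr (qE_mem_grade _), rfl⟩
    rw [heq]
    apply finrank_span_singleton
    intro h0
    rw [hπ, Submodule.mkQ_apply, Submodule.Quotient.mk_eq_zero, Submodule.mem_comap] at h0
    have := hSle h0
    rw [LinearMap.mem_ker] at this
    have h1 : blTrace (qE (Matrix.single z z (1 : F))) = 0 := this
    rw [blTrace_qE, htrE] at h1
    exact one_ne_zero h1
  · -- Part 2 : center
    have heq : queerCenter F n ⊓ (matGrade F n 0).comap (queer F n).subtype
        = Submodule.span F {(⟨1, h1q⟩ : queer F n)} := by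
      apply le_antisymm
      · rintro x ⟨hc, hg⟩
        replace hg : (x : Matrix (Fin n ⊕ Fin n) (Fin n ⊕ Fin n) F) ∈ matGrade F n 0 := hg
        have hxE := even_queer_eq x.2 hg
        set A := Matrix.of fun i j =>
          (x : Matrix (Fin n ⊕ Fin n) (Fin n ⊕ Fin n) F) (Sum.inl i) (Sum.inl j) with hA
        have hcomm : Pairwise fun k l => Commute (Matrix.single k l (1 : F)) A := by
          intro k l _
          have hx := hc ⟨qE (Matrix.single k l 1), qE_mem_queer _⟩
          rw [show ((⟨qE (Matrix.single k l 1), qE_mem_queer _⟩ : queer F n) :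
              Matrix (Fin n ⊕ Fin n) (Fin n ⊕ Fin n) F) = qE (Matrix.single k l 1)
              from rfl, hxE, qE_mul_qE, qE_mul_qE] at hx
          have hAB : A * Matrix.single k l 1 = Matrix.single k l 1 * A := by
            ext a b
            have := congrFun (congrFun hx (Sum.inl a)) (Sum.inl b)
            simpa [qE, Matrix.fromBlocks] using this
          exact hAB.symm
        obtain ⟨r, hr⟩ := Matrix.mem_range_scalar_of_commute_single hcomm
        have hscal : Matrix.scalar (Fin n) r = r • (1 : Matrix (Fin n) (Fin n) F) := by
          ext i j
          by_cases h : i = j <;>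
            simp [Matrix.scalar_apply, Matrix.diagonal_apply, Matrix.one_apply, h]
        rw [Submodule.mem_span_singleton]
        refine ⟨r, Subtype.ext ?_⟩
        show r • (1 : Matrix (Fin n ⊕ Fin n) (Fin n ⊕ Fin n) F)
            = (x : Matrix (Fin n ⊕ Fin n) (Fin n ⊕ Fin n) F)
        rw [hxE, ← hr, hscal, map_smul, h1E]
      · rw [Submodule.span_le, Set.singleton_subset_iff]
        refine Submodule.mem_inf.mpr ⟨fun p => ?_, Submodule.mem_comap.mpr ?_⟩
        · show (1 : Matrix (Fin n ⊕ Fin n) (Fin n ⊕ Fin n) F) * p = p * 1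
          rw [one_mul, mul_one]
        · show (1 : Matrix (Fin n ⊕ Fin n) (Fin n ⊕ Fin n) F) ∈ matGrade F n 0
          rw [← h1E]
          exact qE_mem_grade 1
    rw [heq]
    apply finrank_span_singleton
    intro h0
    have := congrFun (congrFun (congrArg Subtype.val h0) (Sum.inl z)) (Sum.inl z)
    simp [Matrix.one_apply] at this
  · -- Part 3 : supercocenter
    set S2 : Submodule F (Matrix (Fin n ⊕ Fin n) (Fin n ⊕ Fin n) F) :=
      Submodule.span F {u : Matrix (Fin n ⊕ Fin n) (Fin n ⊕ Fin n) F |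
        ∃ (i j : ZMod 2) (p q : Matrix (Fin n ⊕ Fin n) (Fin n ⊕ Fin n) F),
          p ∈ queer F n ⊓ matGrade F n i ∧ q ∈ queer F n ⊓ matGrade F n j ∧
          u = p * q - ((-1 : F) ^ (i.val * j.val)) • (q * p)} with hS2
    have hbot : ((matGrade F n 0).comap (queer F n).subtype).map
        ((S2.comap (queer F n).subtype)).mkQ = ⊥ := by
      rw [eq_bot_iff]
      rintro - ⟨x, hx, rfl⟩
      replace hx : (x : Matrix (Fin n ⊕ Fin n) (Fin n ⊕ Fin n) F) ∈ matGrade F n 0 := hx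
      rw [Submodule.mem_bot, Submodule.mkQ_apply, Submodule.Quotient.mk_eq_zero,
        Submodule.mem_comap]
      have hxE := even_queer_eq x.2 hx
      set A := Matrix.of fun i j =>
        (x : Matrix (Fin n ⊕ Fin n) (Fin n ⊕ Fin n) F) (Sum.inl i) (Sum.inl j) with hA
      show (x : Matrix (Fin n ⊕ Fin n) (Fin n ⊕ Fin n) F) ∈ S2
      rw [hxE]
      have hgen : qO A * qO 1 - ((-1 : F) ^ ((1 : ZMod 2).val * (1 : ZMod 2).val)) •
          (qO 1 * qO A) ∈ S2 := by
        rw [hS2]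
        exact Submodule.subset_span ⟨1, 1, qO A, qO 1,
          ⟨qO_mem_queer A, qO_mem_grade A⟩, ⟨qO_mem_queer 1, qO_mem_grade 1⟩, rfl⟩
      have hval : ((1 : ZMod 2).val * (1 : ZMod 2).val) = 1 := rfl
      have hu : qO A * qO 1 - ((-1 : F) ^ ((1 : ZMod 2).val * (1 : ZMod 2).val)) •
          (qO 1 * qO A) = (-2 : F) • qE A := by
        rw [qO_mul_qO, qO_mul_qO, mul_one, one_mul, hval, pow_one, map_neg]
        module
      rw [hu] at hgen
      have := S2.smul_mem (-2 : F)⁻¹ hgen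
      rwa [smul_smul, inv_mul_cancel₀ (neg_ne_zero.mpr hchar), one_smul] at this
    rw [hbot, finrank_bot]
end

section
/- In the algebra (A_n^g)' generated by even elements s_0, s_1, …, s_{n−1} and odd elements c_1, …, c_n subject to s_i² = 1 (i ≥ 1), g(s_0) = 0, the braid relations among s_1,…,s_{n−1}, the relation s_1 s_0 s_1 s_0 − s_0 s_1 s_0 s_1 = s_0(1 + c_1 c_2) s_1 − (1 + c_1 c_2) s_1 s_0, Clifford relations for the c_i, s_i c_i = c_{i+1} s_i, s_i c_{i+1} = c_i s_i, s_i c_j = c_j s_i (j ≠ i, i+1), s_0 c_1 = −c_1 s_0, s_0 c_j = c_j s_0 (j ≥ 2), the following identity holds for all a, b ∈ ℕ: s_1 s_0^a s_1 s_0^b − s_0^b s_1 s_0^a s_1 = Σ_{i=1}^{b} ( s_0^{a+b−i}(1 + (−1)^{a−1} c_1 c_2) s_1 s_0^{i−1} − s_0^{i−1}(1 + (−1)^{a−1} c_1 c_2) s_1 s_0^{a+b−i} ). -/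
/-- Generators of the new presentation of the cyclotomic Sergeev algebra:
`t` is the order-`g` generator `s₀`, `s i` the transposition of strands
`i, i+1` (0-based), and `c i` the Clifford generators. -/
inductive TGen : Type
  | t : TGen
  | s : ℕ → TGen
  | c : ℕ → TGen

open FreeAlgebra in
/-- The relations of the new presentation `(H_n^g)'` of the cyclotomic Sergeev
algebra on `n` strands. -/
inductive TRel (R : Type) [CommRing R] (n : ℕ) (g : Polynomial R) :
    FreeAlgebra R TGen → FreeAlgebra R TGen → Prop
  | tInv (h : n = 0) : TRel R n g (ι R TGen.t) 0
  | sInv (i : ℕ) (h : n ≤ i + 1) : TRel R n g (ι R (TGen.s i)) 0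
  | cInv (i : ℕ) (h : n ≤ i) : TRel R n g (ι R (TGen.c i)) 0
  | sSq (i : ℕ) (h : i + 1 < n) : TRel R n g (ι R (TGen.s i) * ι R (TGen.s i)) 1
  | tPoly (h : 0 < n) : TRel R n g (Polynomial.aeval (ι R TGen.t) g) 0
  | sComm (i j : ℕ) (hij : i + 1 < j) (hj : j + 1 < n) :
      TRel R n g (ι R (TGen.s i) * ι R (TGen.s j)) (ι R (TGen.s j) * ι R (TGen.s i))
  | sBraid (i : ℕ) (h : i + 2 < n) :
      TRel R n g (ι R (TGen.s i) * ι R (TGen.s (i+1)) * ι R (TGen.s i))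
        (ι R (TGen.s (i+1)) * ι R (TGen.s i) * ι R (TGen.s (i+1)))
  | tsComm (i : ℕ) (h1 : 1 ≤ i) (h2 : i + 1 < n) :
      TRel R n g (ι R TGen.t * ι R (TGen.s i)) (ι R (TGen.s i) * ι R TGen.t)
  | weakBraid (h : 2 ≤ n) :
      TRel R n g
        (ι R (TGen.s 0) * ι R TGen.t * ι R (TGen.s 0) * ι R TGen.t -
          ι R TGen.t * ι R (TGen.s 0) * ι R TGen.t * ι R (TGen.s 0))
        (ι R TGen.t * (1 + ι R (TGen.c 0) * ι R (TGen.c 1)) * ι R (TGen.s 0) -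
          (1 + ι R (TGen.c 0) * ι R (TGen.c 1)) * ι R (TGen.s 0) * ι R TGen.t)
  | cSq (i : ℕ) (h : i < n) : TRel R n g (ι R (TGen.c i) * ι R (TGen.c i)) 1
  | cAnti (i j : ℕ) (h : i ≠ j) :
      TRel R n g (ι R (TGen.c i) * ι R (TGen.c j)) (-(ι R (TGen.c j) * ι R (TGen.c i)))
  | scLeft (i : ℕ) (h : i + 1 < n) :
      TRel R n g (ι R (TGen.s i) * ι R (TGen.c i)) (ι R (TGen.c (i+1)) * ι R (TGen.s i))
  | scRight (i : ℕ) (h : i + 1 < n) :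
      TRel R n g (ι R (TGen.s i) * ι R (TGen.c (i+1))) (ι R (TGen.c i) * ι R (TGen.s i))
  | scOther (i j : ℕ) (h1 : j ≠ i) (h2 : j ≠ i + 1) :
      TRel R n g (ι R (TGen.s i) * ι R (TGen.c j)) (ι R (TGen.c j) * ι R (TGen.s i))
  | tc (h : 0 < n) :
      TRel R n g (ι R TGen.t * ι R (TGen.c 0)) (-(ι R (TGen.c 0) * ι R TGen.t))
  | tcOther (j : ℕ) (h : 1 ≤ j) :
      TRel R n g (ι R TGen.t * ι R (TGen.c j)) (ι R (TGen.c j) * ι R TGen.t)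

/-- The new presentation `(H_n^g)'` of the cyclotomic Sergeev algebra. -/
abbrev SergeevP (R : Type) [CommRing R] (n : ℕ) (g : Polynomial R) : Type :=
  RingQuot (TRel R n g)

namespace SergeevP

variable (R : Type) [CommRing R] (n : ℕ) (g : Polynomial R)

/-- The generator `s₀` (denoted `t`). -/
noncomputable def T : SergeevP R n g :=
  RingQuot.mkAlgHom R (TRel R n g) (FreeAlgebra.ι R TGen.t)

/-- The generator `s i` (0-based: the paper's `s_{i+1}`). -/
noncomputable def S (i : ℕ) : SergeevP R n g :=
  RingQuot.mkAlgHom R (TRel R n g) (FreeAlgebra.ι R (TGen.s i))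

/-- The generator `c i` (0-based: the paper's `c_{i+1}`). -/
noncomputable def C (i : ℕ) : SergeevP R n g :=
  RingQuot.mkAlgHom R (TRel R n g) (FreeAlgebra.ι R (TGen.c i))

end SergeevP

section Abstract

variable {A : Type} [Ring A]

private lemma neg_one_pow_comm (x : A) (k : ℕ) : (-1:A)^k * x = x * (-1:A)^k :=
  ((Commute.neg_one_left x).pow_left k).eq

private lemma pow_mul_e {t e : A} (hte : t * e = -(e * t)) :
    ∀ k : ℕ, t ^ k * e = (-1:A) ^ k * (e * t ^ k) := by
  intro k
  induction k with
  | zero => simp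
  | succ k ih =>
    calc t^(k+1) * e = t^k * (t * e) := by rw [pow_succ, mul_assoc]
    _ = -(t^k * e * t) := by rw [hte]; noncomm_ring
    _ = -((-1:A)^k * (e * t^k) * t) := by rw [ih]
    _ = (-1:A)^(k+1) * (e * t^(k+1)) := by rw [pow_succ t, pow_succ (-1:A)]; noncomm_ring

private lemma e_mul_pow {t e : A} (hte : t * e = -(e * t)) (k : ℕ) :
    e * t ^ k = (-1:A) ^ k * (t ^ k * e) := by
  have h := pow_mul_e hte k
  have h2 : (-1:A)^k * ((-1:A)^k * (e * t^k)) = e * t^k := by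
    rw [← mul_assoc, ← pow_add]
    have h3 : (-1:A)^(k+k) = 1 := by rw [← two_mul, pow_mul]; simp
    rw [h3, one_mul]
  rw [← h2, h]


private lemma stepB {t s : A} (a : ℕ) (E : A) (ha : 1 ≤ a)
    (hFa1 : s*t^a*s*t - t*s*t^a*s = t^a*E*s - E*s*t^a) :
    ∀ b : ℕ, s*t^a*s*t^b - t^b*s*t^a*s
      = ∑ j ∈ Finset.range b, (t^(a+b-1-j)*E*s*t^j - t^j*E*s*t^(a+b-1-j)) := by
  intro b
  induction b with
  | zero => simp
  | succ b ih =>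
    have key : s*t^a*s*t^(b+1) - t^(b+1)*s*t^a*s
        = (s*t^a*s*t^b - t^b*s*t^a*s)*t + t^b*(s*t^a*s*t - t*s*t^a*s) := by
      rw [pow_succ]; noncomm_ring
    rw [key, ih, hFa1]
    rw [Finset.sum_sub_distrib, Finset.sum_sub_distrib,
      Finset.sum_range_succ' (fun j => t^(a+(b+1)-1-j)*E*s*t^j) b,
      Finset.sum_range_succ (fun j => t^j*E*s*t^(a+(b+1)-1-j)) b]
    have h1 : ∀ j ∈ Finset.range b,
        t^(a+(b+1)-1-(j+1))*E*s*t^(j+1) = (t^(a+b-1-j)*E*s*t^j)*t := by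
      intro j hj
      have h : a+(b+1)-1-(j+1) = a+b-1-j := by omega
      rw [h, pow_succ]; noncomm_ring
    have h2 : ∀ j ∈ Finset.range b,
        t^j*E*s*t^(a+(b+1)-1-j) = (t^j*E*s*t^(a+b-1-j))*t := by
      intro j hj
      simp only [Finset.mem_range] at hj
      have h : a+(b+1)-1-j = (a+b-1-j)+1 := by omega
      rw [h, pow_succ]; noncomm_ring
    rw [Finset.sum_congr rfl h1, Finset.sum_congr rfl h2]
    have h3 : a+(b+1)-1-b = a := by omega
    have h4 : a+(b+1)-1-0 = a+b := by omega
    rw [h3, h4]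
    have h5 : t^(a+b)*E*s*t^0 = t^b*(t^a*E*s) := by
      rw [pow_zero, mul_one, add_comm a b, pow_add]; noncomm_ring
    rw [h5, sub_mul, Finset.sum_mul, Finset.sum_mul]
    noncomm_ring

private lemma Fa1 {t s e : A} (hs : s*s = 1) (hte : t*e = -(e*t)) (hse : s*e = -(e*s))
    (hwb : s*t*s*t - t*s*t*s = t*(1+e)*s - (1+e)*s*t) (a : ℕ) (ha : 1 ≤ a) :
    s*t^a*s*t - t*s*t^a*s
      = t^a*(1+(-1:A)^(a-1)*e)*s - (1+(-1:A)^(a-1)*e)*s*t^a := by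
  obtain ⟨a, rfl⟩ : ∃ a', a = a'+1 := ⟨a-1, by omega⟩
  simp only [Nat.add_sub_cancel]
  have hF11 : s*t^1*s*t - t*s*t^1*s = t^1*(1+e)*s - (1+e)*s*t^1 := by
    simpa [pow_one] using hwb
  have hF1b := stepB 1 (1+e) le_rfl hF11 (a+1)
  simp only [show ∀ j:ℕ, 1+(a+1)-1-j = a+1-j from fun j => by omega, pow_one] at hF1b
  -- conjugation
  set X : ℕ → A := fun k => s*(t^k*(1+e)*s*t^(a+1-k))*s with hX
  have hconj : s*t^(a+1)*s*t - t*s*t^(a+1)*s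
      = -(s*(s*t*s*t^(a+1) - t^(a+1)*s*t*s)*s) := by
    have e1 : s*(s*t*s*t^(a+1))*s = t*s*t^(a+1)*s := by
      calc s*(s*t*s*t^(a+1))*s = (s*s)*(t*s*t^(a+1)*s) := by noncomm_ring
      _ = t*s*t^(a+1)*s := by rw [hs, one_mul]
    have e2 : s*(t^(a+1)*s*t*s)*s = (s*t^(a+1)*s*t)*(s*s) := by noncomm_ring
    rw [mul_sub, sub_mul, e1, e2, hs, mul_one, neg_sub]
  rw [hconj, hF1b, Finset.mul_sum, Finset.sum_mul, ← Finset.sum_neg_distrib]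
  have hterm : ∀ j ∈ Finset.range (a+1),
      -(s*(t^(a+1-j)*(1+e)*s*t^j - t^j*(1+e)*s*t^(a+1-j))*s) = X j - X (a+1-j) := by
    intro j hj
    simp only [Finset.mem_range] at hj
    have hj2 : a+1-(a+1-j) = j := by omega
    simp only [hX]
    rw [hj2]
    noncomm_ring
  rw [Finset.sum_congr rfl hterm, Finset.sum_sub_distrib]
  have hrefl : ∑ j ∈ Finset.range (a+1), X (a+1-j) = ∑ j ∈ Finset.range (a+1), X (j+1) := by
    rw [← Finset.sum_range_reflect (fun j => X (j+1)) (a+1)]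
    refine Finset.sum_congr rfl fun j hj => ?_
    simp only [Finset.mem_range] at hj
    congr 1
    omega
  rw [hrefl, ← Finset.sum_sub_distrib, Finset.sum_range_sub' X (a+1)]
  -- compute X 0 and X (a+1)
  have hee : e * t^(a+1) = (-1:A)^(a+1) * (t^(a+1)*e) := e_mul_pow hte (a+1)
  have hee2 : t^(a+1) * e = (-1:A)^(a+1) * (e * t^(a+1)) := pow_mul_e hte (a+1)
  have hsgn : (-1:A)^(a+1) = -(-1:A)^a := by rw [pow_succ, mul_neg_one]
  have hc1 : (-1:A)^a * (t^(a+1)*e) = t^(a+1)*((-1:A)^a*e) := by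
    rw [← mul_assoc, neg_one_pow_comm (t^(a+1)) a, mul_assoc]
  have hc2 : s*((-1:A)^(a+1)*(e*t^(a+1))) = (-1:A)^(a+1)*(s*e*t^(a+1)) := by
    rw [← mul_assoc, ← neg_one_pow_comm s (a+1), mul_assoc, ← mul_assoc s e]
  have hX0 : X 0 = t^(a+1)*(1+(-1:A)^a*e)*s := by
    simp only [hX, Nat.sub_zero, pow_zero, one_mul]
    calc s*((1+e)*s*t^(a+1))*s
        = (s*s)*(t^(a+1)*s) + (s*e)*(s*(t^(a+1)*s)) := by noncomm_ring
      _ = t^(a+1)*s + -(e*s)*(s*(t^(a+1)*s)) := by rw [hs, one_mul, hse]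
      _ = t^(a+1)*s - e*((s*s)*(t^(a+1)*s)) := by noncomm_ring
      _ = t^(a+1)*s - e*t^(a+1)*s := by rw [hs, one_mul, mul_assoc]
      _ = t^(a+1)*s - ((-1:A)^(a+1) * (t^(a+1)*e))*s := by rw [hee]
      _ = t^(a+1)*s + ((-1:A)^a * (t^(a+1)*e))*s := by rw [hsgn]; noncomm_ring
      _ = t^(a+1)*s + t^(a+1)*((-1:A)^a*e)*s := by rw [hc1]
      _ = t^(a+1)*(1+(-1:A)^a*e)*s := by noncomm_ring
  have hXa : X (a+1) = (1+(-1:A)^a*e)*s*t^(a+1) := by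
    simp only [hX, Nat.sub_self, pow_zero, mul_one]
    calc s*(t^(a+1)*(1+e)*s)*s
        = s*(t^(a+1)*(s*s)) + s*((t^(a+1)*e)*(s*s)) := by noncomm_ring
      _ = s*t^(a+1) + s*(t^(a+1)*e) := by rw [hs]; noncomm_ring
      _ = s*t^(a+1) + s*((-1:A)^(a+1) * (e * t^(a+1))) := by rw [hee2]
      _ = s*t^(a+1) + (-1:A)^(a+1) * (s*e * t^(a+1)) := by rw [hc2]
      _ = s*t^(a+1) + (-1:A)^(a+1) * (-(e*s) * t^(a+1)) := by rw [hse]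
      _ = s*t^(a+1) + (-1:A)^a * (e*s*t^(a+1)) := by rw [hsgn]; noncomm_ring
      _ = s*t^(a+1) + ((-1:A)^a * e)*s*t^(a+1) := by noncomm_ring
      _ = (1+(-1:A)^a*e)*s*t^(a+1) := by noncomm_ring
  rw [hX0, hXa]

private lemma abstractMain {t s e : A} (hs : s*s = 1) (hte : t*e = -(e*t))
    (hse : s*e = -(e*s))
    (hwb : s*t*s*t - t*s*t*s = t*(1+e)*s - (1+e)*s*t) (a b : ℕ) (ha : 1 ≤ a) :
    s*t^a*s*t^b - t^b*s*t^a*s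
      = ∑ i ∈ Finset.Icc 1 b,
          (t^(a+b-i)*(1+(-1:A)^(a-1)*e)*s*t^(i-1)
            - t^(i-1)*(1+(-1:A)^(a-1)*e)*s*t^(a+b-i)) := by
  have hFa1 := Fa1 hs hte hse hwb a ha
  have h := stepB a (1+(-1:A)^(a-1)*e) ha hFa1 b
  have hre : ∀ (f : ℕ → A) (m : ℕ),
      ∑ i ∈ Finset.Icc 1 m, f i = ∑ j ∈ Finset.range m, f (j+1) := by
    intro f m
    induction m with
    | zero => simp
    | succ m ih => rw [Finset.sum_Icc_succ_top (by omega), ih, Finset.sum_range_succ]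
  rw [h, hre]
  refine Finset.sum_congr rfl fun j hj => ?_
  have e1 : j+1-1 = j := by omega
  have e2 : a+b-(j+1) = a+b-1-j := by omega
  rw [e1, e2]

private lemma helper_te {t c0 c1 : A} (h0 : t*c0 = -(c0*t)) (h1 : t*c1 = c1*t) :
    t*(c0*c1) = -((c0*c1)*t) := by
  calc t*(c0*c1) = (t*c0)*c1 := by rw [mul_assoc]
    _ = -(c0*t)*c1 := by rw [h0]
    _ = -(c0*(t*c1)) := by rw [neg_mul, mul_assoc]
    _ = -(c0*(c1*t)) := by rw [h1]
    _ = -((c0*c1)*t) := by rw [mul_assoc]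

private lemma helper_se {s c0 c1 : A} (h0 : s*c0 = c1*s) (h1 : s*c1 = c0*s)
    (h2 : c1*c0 = -(c0*c1)) : s*(c0*c1) = -((c0*c1)*s) := by
  calc s*(c0*c1) = (s*c0)*c1 := by rw [mul_assoc]
    _ = c1*(s*c1) := by rw [h0, mul_assoc]
    _ = (c1*c0)*s := by rw [h1, mul_assoc]
    _ = -((c0*c1)*s) := by rw [h2, neg_mul]

end Abstract


open SergeevP in
/-- In the new presentation `(H_n^g)'` of the cyclotomic Sergeev algebra (with
`s₀` denoted `T`, and the paper's `s₁, c₁, c₂` being `S 0, C 0, C 1`), for all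
`a ≥ 1` and all `b`:
`s₁ s₀^a s₁ s₀^b - s₀^b s₁ s₀^a s₁ =
  ∑_{i=1}^{b} ( s₀^{a+b-i}(1 + (-1)^{a-1} c₁ c₂) s₁ s₀^{i-1}
              - s₀^{i-1}(1 + (-1)^{a-1} c₁ c₂) s₁ s₀^{a+b-i} )`. -/
theorem weak_braid_power_identity
    (R : Type) [CommRing R] [IsDomain R] (h2 : IsUnit (2 : R))
    (n d : ℕ) (g : Polynomial R) (hmon : g.Monic) (hdeg : g.natDegree = d)
    (hpar : ∀ k : ℕ, k % 2 ≠ d % 2 → g.coeff k = 0)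
    (a b : ℕ) (ha : 1 ≤ a) :
    S R n g 0 * T R n g ^ a * S R n g 0 * T R n g ^ b -
        T R n g ^ b * S R n g 0 * T R n g ^ a * S R n g 0 =
      ∑ i ∈ Finset.Icc 1 b,
        (T R n g ^ (a + b - i) *
            (1 + (-1 : SergeevP R n g) ^ (a - 1) * (C R n g 0 * C R n g 1)) *
            S R n g 0 * T R n g ^ (i - 1) -
          T R n g ^ (i - 1) *
            (1 + (-1 : SergeevP R n g) ^ (a - 1) * (C R n g 0 * C R n g 1)) *
            S R n g 0 * T R n g ^ (a + b - i)) := by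
  by_cases hn : 2 ≤ n
  · have hs : S R n g 0 * S R n g 0 = 1 := by
      have h := RingQuot.mkAlgHom_rel R (TRel.sSq (R := R) (n := n) (g := g) 0 (by omega))
      rw [map_mul, map_one] at h
      exact h
    have htc0 : T R n g * C R n g 0 = -(C R n g 0 * T R n g) := by
      have h := RingQuot.mkAlgHom_rel R (TRel.tc (R := R) (n := n) (g := g) (by omega))
      rw [map_mul, map_neg, map_mul] at h
      exact h
    have htc1 : T R n g * C R n g 1 = C R n g 1 * T R n g := by
      have h := RingQuot.mkAlgHom_rel R (TRel.tcOther (R := R) (n := n) (g := g) 1 le_rfl)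
      rw [map_mul, map_mul] at h
      exact h
    have hsc0 : S R n g 0 * C R n g 0 = C R n g 1 * S R n g 0 := by
      have h := RingQuot.mkAlgHom_rel R (TRel.scLeft (R := R) (n := n) (g := g) 0 (by omega))
      rw [map_mul, map_mul] at h
      exact h
    have hsc1 : S R n g 0 * C R n g 1 = C R n g 0 * S R n g 0 := by
      have h := RingQuot.mkAlgHom_rel R (TRel.scRight (R := R) (n := n) (g := g) 0 (by omega))
      rw [map_mul, map_mul] at h
      exact h
    have hanti : C R n g 1 * C R n g 0 = -(C R n g 0 * C R n g 1) := by
      have h := RingQuot.mkAlgHom_rel R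
        (TRel.cAnti (R := R) (n := n) (g := g) 1 0 one_ne_zero)
      rw [map_mul, map_neg, map_mul] at h
      exact h
    have hte : T R n g * (C R n g 0 * C R n g 1)
        = -((C R n g 0 * C R n g 1) * T R n g) := by
      exact helper_te htc0 htc1
    have hse : S R n g 0 * (C R n g 0 * C R n g 1)
        = -((C R n g 0 * C R n g 1) * S R n g 0) := by
      exact helper_se hsc0 hsc1 hanti
    have hwb : S R n g 0 * T R n g * S R n g 0 * T R n g
          - T R n g * S R n g 0 * T R n g * S R n g 0
        = T R n g * (1 + C R n g 0 * C R n g 1) * S R n g 0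
          - (1 + C R n g 0 * C R n g 1) * S R n g 0 * T R n g := by
      have h := RingQuot.mkAlgHom_rel R (TRel.weakBraid (R := R) (n := n) (g := g) hn)
      simp only [map_sub, map_mul, map_add, map_one] at h
      exact h
    exact abstractMain hs hte hse hwb a b ha
  · have hS : S R n g 0 = 0 := by
      have h := RingQuot.mkAlgHom_rel R (TRel.sInv (R := R) (n := n) (g := g) 0 (by omega))
      rw [map_zero] at h
      exact h
    rw [hS]
    simp
end

section
/- In the complex reflection group G(d,1,n) with generators s_0 of order d and s_1, …, s_{n−1} of order 2 (Coxeter relations of type B), for all a, b ≥ 0 the weak braid relation s_0^a s_1 s_0^b s_1 = s_1 s_0^b s_1 s_0^a holds. -/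
/-- The weak braid relation in the complex reflection group `G(d,1,n)` (type
`G(d,1,n)` with `n ≥ 2`): in any group `G` with elements `s 0, …, s (n-1)`
satisfying `s₀^d = 1`, `s_i² = 1` for `1 ≤ i < n`, the order-4 braid relation
between `s₀` and `s₁`, the type-A braid relations among `s₁, …, s_{n-1}`, and
commutation for `|i - j| > 1`, the relation `s₀^a s₁ s₀^b s₁ = s₁ s₀^b s₁ s₀^a`
holds for all `a, b ≥ 0`. -/
theorem weak_braid_relation_G_d_1_n
    (G : Type*) [Group G] (d n : ℕ) (hn : 2 ≤ n) (s : ℕ → G)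
    (h0 : s 0 ^ d = 1)
    (hsq : ∀ i : ℕ, 1 ≤ i → i < n → s i ^ 2 = 1)
    (hbr0 : s 0 * s 1 * s 0 * s 1 = s 1 * s 0 * s 1 * s 0)
    (hbr : ∀ i : ℕ, 1 ≤ i → i + 1 < n → s i * s (i+1) * s i = s (i+1) * s i * s (i+1))
    (hcomm : ∀ i j : ℕ, i + 1 < j → j < n → s i * s j = s j * s i) :
    ∀ a b : ℕ, s 0 ^ a * s 1 * s 0 ^ b * s 1 = s 1 * s 0 ^ b * s 1 * s 0 ^ a := by
  have hu : s 1 * s 1 = 1 := by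
    have := hsq 1 le_rfl (by omega)
    rwa [pow_two] at this
  have hx : Commute (s 0) (s 1 * s 0 * s 1) := by
    unfold Commute SemiconjBy
    calc s 0 * (s 1 * s 0 * s 1) = s 0 * s 1 * s 0 * s 1 := by group
    _ = s 1 * s 0 * s 1 * s 0 := hbr0
  have hb : ∀ b : ℕ, s 1 * s 0 ^ b * s 1 = (s 1 * s 0 * s 1) ^ b := by
    intro b
    induction b with
    | zero => simpa using hu
    | succ b ih =>
      calc s 1 * s 0 ^ (b + 1) * s 1
          = (s 1 * s 0 ^ b * s 1) * (s 1 * s 0 * s 1) := by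
            rw [pow_succ]
            calc s 1 * (s 0 ^ b * s 0) * s 1
                = s 1 * s 0 ^ b * (s 1 * s 1) * (s 0 * s 1) := by
                  rw [hu]; simp [mul_assoc]
              _ = s 1 * s 0 ^ b * s 1 * (s 1 * s 0 * s 1) := by
                  simp [mul_assoc]
        _ = (s 1 * s 0 * s 1) ^ (b + 1) := by rw [ih, pow_succ]
  intro a b
  calc s 0 ^ a * s 1 * s 0 ^ b * s 1
      = s 0 ^ a * (s 1 * s 0 ^ b * s 1) := by group
    _ = s 0 ^ a * (s 1 * s 0 * s 1) ^ b := by rw [hb]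
    _ = (s 1 * s 0 * s 1) ^ b * s 0 ^ a := ((hx.pow_pow a b).eq)
    _ = s 1 * s 0 ^ b * s 1 * s 0 ^ a := by rw [hb]
end

section
/- Fix d = 2m+1 odd. There is a bijection between: (a) the set of pairs (λ, μ) where λ is a colored opposite partition with colors c(i) ∈ {1,…,d−1} (weakly decreasing colors on equal parts), μ a partition, |λ| + |μ| = n, such that λ_i + c(i) is odd for all i and μ has all parts odd; and (b) the set ⊔_{a=0}^{n} { (strict partition of a) × (m-multipartition of n−a) }. -/
/-- A colored semi-bipartition datum: `lam` is an opposite partition (a weakly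
increasing list of positive parts) with a color `col i ∈ {1, …, d-1}` attached
to its `i`-th part, colors being weakly decreasing along equal parts, together
with a partition `mu` (given as a multiset of positive parts), with
`|lam| + |mu| = n`. -/
structure ColoredSemiBipartition (d n : ℕ) where
  lam : List ℕ
  col : List ℕ
  mu : Multiset ℕ
  col_len : col.length = lam.length
  lam_pos : ∀ a ∈ lam, 0 < a
  lam_mono : lam.Pairwise (· ≤ ·)
  col_range : ∀ x ∈ col, 1 ≤ x ∧ x ≤ d - 1
  col_dec : ∀ i : ℕ, i + 1 < lam.length →
    lam.getD i 0 = lam.getD (i+1) 0 → col.getD (i+1) 0 ≤ col.getD i 0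
  mu_pos : ∀ a ∈ mu, 0 < a
  total : lam.sum + mu.sum = n

/-- The subset of colored semi-bipartitions with `λ_i + c(i)` odd for every row
and all parts of `μ` odd. -/
def TildeP (d n : ℕ) : Type :=
  {p : ColoredSemiBipartition d n //
    (∀ i : ℕ, i < p.lam.length → (p.lam.getD i 0 + p.col.getD i 0) % 2 = 1) ∧
    ∀ a ∈ p.mu, Odd a}

/-- `m`-multipartitions of `n` (each component a partition, recorded as a
multiset of positive parts). -/
def MultiPartition (m n : ℕ) : Type :=
  {f : Fin m → Multiset ℕ //
    (∀ i, ∀ a ∈ f i, 0 < a) ∧ (∑ i, (f i).sum) = n}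

/-- Pairs of a strict partition and an `m`-multipartition of total size `n`. -/
def StrictTimesMulti (m n : ℕ) : Type :=
  {q : Multiset ℕ × (Fin m → Multiset ℕ) //
    q.1.Nodup ∧ (∀ a ∈ q.1, 0 < a) ∧ (∀ i, ∀ a ∈ q.2 i, 0 < a) ∧
    q.1.sum + ∑ i, (q.2 i).sum = n}

open PowerSeries

namespace Theorems100

noncomputable section

variable {α : Type*}

open Finset

open scoped Classical

/-- The partial product for the generating function for odd partitions.
TODO: As `m` tends to infinity, this converges (in the `X`-adic topology).

If `m` is sufficiently large, the `i`th coefficient gives the number of odd partitions of the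
natural number `i`: proved in `oddGF_prop`.
It is stated for an arbitrary field `α`, though it usually suffices to use `ℚ` or `ℝ`.
-/
def partialOddGF (m : ℕ) [Field α] :=
  ∏ i ∈ range m, (1 - (X : PowerSeries α) ^ (2 * i + 1))⁻¹

/-- The partial product for the generating function for distinct partitions.
TODO: As `m` tends to infinity, this converges (in the `X`-adic topology).

If `m` is sufficiently large, the `i`th coefficient gives the number of distinct partitions of the
natural number `i`: proved in `distinctGF_prop`.
It is stated for an arbitrary commutative semiring `α`, though it usually suffices to use `ℕ`, `ℚ`
or `ℝ`.
-/
def partialDistinctGF (m : ℕ) [CommSemiring α] :=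
  ∏ i ∈ range m, (1 + (X : PowerSeries α) ^ (i + 1))

open Finset.HasAntidiagonal

universe u
variable {ι : Type u}

/-- A convenience constructor for the power series whose coefficients indicate a subset. -/
def indicatorSeries (α : Type*) [Semiring α] (s : Set ℕ) : PowerSeries α :=
  PowerSeries.mk fun n => if n ∈ s then 1 else 0

theorem coeff_indicator (s : Set ℕ) [Semiring α] (n : ℕ) :
    coeff n (indicatorSeries α s) = if n ∈ s then 1 else 0 :=
  coeff_mk _ _

theorem coeff_indicator_pos (s : Set ℕ) [Semiring α] (n : ℕ) (h : n ∈ s) :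
    coeff n (indicatorSeries α s) = 1 := by rw [coeff_indicator, if_pos h]

theorem coeff_indicator_neg (s : Set ℕ) [Semiring α] (n : ℕ) (h : n ∉ s) :
    coeff n (indicatorSeries α s) = 0 := by rw [coeff_indicator, if_neg h]

theorem constantCoeff_indicator (s : Set ℕ) [Semiring α] :
    constantCoeff (indicatorSeries α s) = if 0 ∈ s then 1 else 0 :=
  rfl

theorem two_series (i : ℕ) [Semiring α] :
    1 + (X : PowerSeries α) ^ i.succ = indicatorSeries α {0, i.succ} := by
  ext n
  simp only [coeff_indicator, coeff_one, coeff_X_pow, Set.mem_insert_iff, Set.mem_singleton_iff,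
    map_add]
  cases' n with d
  · simp [(Nat.succ_ne_zero i).symm]
  · simp [Nat.succ_ne_zero d]

theorem num_series' [Field α] (i : ℕ) :
    (1 - (X : PowerSeries α) ^ (i + 1))⁻¹ = indicatorSeries α {k | i + 1 ∣ k} := by
  rw [PowerSeries.inv_eq_iff_mul_eq_one]
  · ext n
    cases n with
    | zero => simp [mul_sub, zero_pow, constantCoeff_indicator]
    | succ n =>
      simp only [coeff_one, if_false, mul_sub, mul_one, coeff_indicator,
        LinearMap.map_sub, reduceCtorEq]
      simp_rw [coeff_mul, coeff_X_pow, coeff_indicator, @boole_mul _ _ _ _]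
      simp only [Set.mem_setOf_eq]; erw [sum_ite, sum_ite]
      simp_rw [@filter_filter _ _ _ _ _, sum_const_zero, add_zero, sum_const, nsmul_eq_mul, mul_one,
        sub_eq_iff_eq_add, zero_add]
      symm
      split_ifs with h
      · suffices #{a ∈ antidiagonal (n + 1) | i + 1 ∣ a.fst ∧ a.snd = i + 1} = 1 by
          convert congr_arg ((↑) : ℕ → α) this; norm_cast
        rw [card_eq_one]
        cases' h with p hp
        refine ⟨((i + 1) * (p - 1), i + 1), ?_⟩
        ext ⟨a₁, a₂⟩
        simp only [mem_filter, Prod.mk.injEq, Finset.HasAntidiagonal.mem_antidiagonal, mem_singleton]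
        constructor
        · rintro ⟨a_left, ⟨a, rfl⟩, rfl⟩
          refine ⟨?_, rfl⟩
          rw [Nat.mul_sub_left_distrib, ← hp, ← a_left, mul_one, Nat.add_sub_cancel]
        · rintro ⟨rfl, rfl⟩
          match p with
          | 0 => rw [mul_zero] at hp; cases hp
          | p + 1 => rw [hp]; simp [mul_add]
      · suffices #{a ∈ antidiagonal (n + 1) | i + 1 ∣ a.fst ∧ a.snd = i + 1} = 0 by
          convert congr_arg ((↑) : ℕ → α) this; norm_cast
        rw [card_eq_zero]
        apply eq_empty_of_forall_notMem
        simp only [Prod.forall, mem_filter, not_and, Finset.HasAntidiagonal.mem_antidiagonal]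
        rintro _ h₁ h₂ ⟨a, rfl⟩ rfl
        apply h
        simp [← h₂]
  · simp [zero_pow]

def mkOdd : ℕ ↪ ℕ :=
  ⟨fun i => 2 * i + 1, fun x y h => by linarith⟩

-- The main workhorse of the partition theorem proof.
theorem partialGF_prop (α : Type*) [CommSemiring α] (n : ℕ) (s : Finset ℕ) (hs : ∀ i ∈ s, 0 < i)
    (c : ℕ → Set ℕ) (hc : ∀ i, i ∉ s → 0 ∈ c i) :
    #{p : n.Partition | (∀ j, p.parts.count j ∈ c j) ∧ ∀ j ∈ p.parts, j ∈ s} =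
      coeff n (∏ i ∈ s, indicatorSeries α ((· * i) '' c i)) := by
  simp_rw [coeff_prod, coeff_indicator, prod_boole, sum_boole]
  apply congr_arg
  simp only [mem_univ, forall_true_left, not_and, not_forall, exists_prop,
    Set.mem_image, not_exists]
  set φ : (a : Nat.Partition n) →
    a ∈ filter (fun p ↦ (∀ (j : ℕ), Multiset.count j p.parts ∈ c j) ∧ ∀ j ∈ p.parts, j ∈ s) univ →
    ℕ →₀ ℕ := fun p _ => {
      toFun := fun i => Multiset.count i p.parts • i
      support := Finset.filter (fun i => i ≠ 0) p.parts.toFinset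
      mem_support_toFun := fun a => by
        simp only [smul_eq_mul, ne_eq, mul_eq_zero, Multiset.count_eq_zero]
        rw [not_or, not_not]
        simp only [Multiset.mem_toFinset, not_not, mem_filter] }
  refine Finset.card_bij φ ?_ ?_ ?_
  · intro a ha
    simp only [φ, not_forall, not_exists, not_and, exists_prop, mem_filter]
    rw [mem_finsuppAntidiag]
    dsimp only [ne_eq, smul_eq_mul, id_eq, eq_mpr_eq_cast, le_eq_subset, Finsupp.coe_mk]
    simp only [mem_univ, forall_true_left, not_and, not_forall, exists_prop,
      mem_filter, true_and] at ha
    refine ⟨⟨?_, fun i ↦ ?_⟩, fun i _ ↦ ⟨a.parts.count i, ha.1 i, rfl⟩⟩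
    · conv_rhs => simp [← a.parts_sum]
      rw [sum_multiset_count_of_subset _ s]
      · simp only [smul_eq_mul]
      · intro i
        simp only [Multiset.mem_toFinset, not_not, mem_filter]
        apply ha.2
    · simp only [ne_eq, Multiset.mem_toFinset, not_not, mem_filter, and_imp]
      exact fun hi _ ↦ ha.2 i hi
  · intro p₁ hp₁ p₂ hp₂ h
    apply Nat.Partition.ext
    simp only [true_and, mem_univ, mem_filter] at hp₁ hp₂
    ext i
    simp only [φ, ne_eq, Multiset.mem_toFinset, not_not, smul_eq_mul, Finsupp.mk.injEq] at h
    by_cases hi : i = 0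
    · rw [hi]
      rw [Multiset.count_eq_zero_of_notMem]
      · rw [Multiset.count_eq_zero_of_notMem]
        intro a; exact Nat.lt_irrefl 0 (hs 0 (hp₂.2 0 a))
      intro a; exact Nat.lt_irrefl 0 (hs 0 (hp₁.2 0 a))
    · rw [← mul_left_inj' hi]
      rw [funext_iff] at h
      exact h.2 i
  · simp only [φ, mem_filter, mem_finsuppAntidiag, mem_univ, exists_prop, true_and, and_assoc]
    rintro f ⟨hf, hf₃, hf₄⟩
    have hf' : f ∈ finsuppAntidiag s n := mem_finsuppAntidiag.mpr ⟨hf, hf₃⟩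
    simp only [mem_finsuppAntidiag] at hf'
    refine ⟨⟨∑ i ∈ s, Multiset.replicate (f i / i) i, ?_, ?_⟩, ?_, ?_, ?_⟩
    · intro i hi
      simp only [exists_prop, Multiset.mem_sum, mem_map, Function.Embedding.coeFn_mk] at hi
      rcases hi with ⟨t, ht, z⟩
      apply hs
      rwa [Multiset.eq_of_mem_replicate z]
    · simp_rw [Multiset.sum_sum, Multiset.sum_replicate, Nat.nsmul_eq_mul]
      rw [← hf'.1]
      refine sum_congr rfl fun i hi => Nat.div_mul_cancel ?_
      rcases hf₄ i hi with ⟨w, _, hw₂⟩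
      rw [← hw₂]
      exact dvd_mul_left _ _
    · intro i
      simp_rw [Multiset.count_sum', Multiset.count_replicate, sum_ite_eq']
      split_ifs with h
      · rcases hf₄ i h with ⟨w, hw₁, hw₂⟩
        rwa [← hw₂, Nat.mul_div_cancel _ (hs i h)]
      · exact hc _ h
    · intro i hi
      rw [Multiset.mem_sum] at hi
      rcases hi with ⟨j, hj₁, hj₂⟩
      rwa [Multiset.eq_of_mem_replicate hj₂]
    · ext i
      simp_rw [Multiset.count_sum', Multiset.count_replicate, sum_ite_eq']
      simp only [ne_eq, Multiset.mem_toFinset, not_not, smul_eq_mul, ite_mul,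
        zero_mul, Finsupp.coe_mk]
      split_ifs with h
      · apply Nat.div_mul_cancel
        rcases hf₄ i h with ⟨w, _, hw₂⟩
        apply Dvd.intro_left _ hw₂
      · apply symm
        rw [← Finsupp.notMem_support_iff]
        exact notMem_mono hf'.2 h

theorem partialOddGF_prop [Field α] (n m : ℕ) :
    #{p : n.Partition | ∀ j ∈ p.parts, j ∈ (range m).map mkOdd} = coeff n (partialOddGF m : PowerSeries α) := by
  rw [partialOddGF]
  convert partialGF_prop α n
    ((range m).map mkOdd) _ (fun _ => Set.univ) (fun _ _ => trivial) using 2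
  · congr
    simp only [true_and, forall_const, Set.mem_univ]
  · rw [Finset.prod_map]
    simp_rw [num_series']
    congr! 2 with x
    ext k
    constructor
    · rintro ⟨p, rfl⟩
      refine ⟨p, ⟨⟩, ?_⟩
      apply mul_comm
    rintro ⟨a_w, -, rfl⟩
    apply Dvd.intro_left a_w rfl
  · intro i
    rw [mem_map]
    rintro ⟨a, -, rfl⟩
    exact Nat.succ_pos _

/-- If m is big enough, the partial product's coefficient counts the number of odd partitions -/
theorem oddGF_prop [Field α] (n m : ℕ) (h : n < m * 2) :
    #(Nat.Partition.odds n) = coeff n (partialOddGF m : PowerSeries α) := by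
  rw [← partialOddGF_prop, Nat.Partition.odds, Nat.Partition.restricted]
  congr with p
  apply forall₂_congr
  intro i hi
  have hin : i ≤ n := by
    simpa [p.parts_sum] using Multiset.single_le_sum (fun _ _ => Nat.zero_le _) _ hi
  simp only [mkOdd, exists_prop, mem_range, Function.Embedding.coeFn_mk, mem_map]
  constructor
  · intro hi₂
    have := Nat.mod_add_div i 2
    rw [Nat.not_even_iff] at hi₂
    rw [hi₂, add_comm] at this
    refine ⟨i / 2, ?_, this⟩
    rw [Nat.div_lt_iff_lt_mul zero_lt_two]
    exact lt_of_le_of_lt hin h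
  · rintro ⟨a, -, rfl⟩
    rw [even_iff_two_dvd]
    apply Nat.two_not_dvd_two_mul_add_one

theorem partialDistinctGF_prop [CommSemiring α] (n m : ℕ) :
    #{p : n.Partition |
        p.parts.Nodup ∧ ∀ j ∈ p.parts, j ∈ (range m).map ⟨Nat.succ, Nat.succ_injective⟩} =
      coeff n (partialDistinctGF m : PowerSeries α) := by
  rw [partialDistinctGF]
  convert partialGF_prop α n
    ((range m).map ⟨Nat.succ, Nat.succ_injective⟩) _ (fun _ => {0, 1}) (fun _ _ => Or.inl rfl)
    using 2
  · congr! with p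
    rw [Multiset.nodup_iff_count_le_one]
    congr! 1 with i
    rcases Multiset.count i p.parts with (_ | _ | ms) <;> simp
  · simp_rw [Finset.prod_map, two_series]
    congr with i
    simp [Set.image_pair]
  · simp only [mem_map, Function.Embedding.coeFn_mk]
    rintro i ⟨_, _, rfl⟩
    apply Nat.succ_pos

/-- If m is big enough, the partial product's coefficient counts the number of distinct partitions
-/
theorem distinctGF_prop [CommSemiring α] (n m : ℕ) (h : n < m + 1) :
    #(Nat.Partition.distincts n) = coeff n (partialDistinctGF m : PowerSeries α) := by
  rw [← partialDistinctGF_prop, Nat.Partition.distincts]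
  congr with p
  apply (and_iff_left _).symm
  intro i hi
  have : i ≤ n := by
    simpa [p.parts_sum] using Multiset.single_le_sum (fun _ _ => Nat.zero_le _) _ hi
  simp only [mkOdd, exists_prop, mem_range, Function.Embedding.coeFn_mk, mem_map]
  refine ⟨i - 1, ?_, Nat.succ_pred_eq_of_pos (p.parts_pos hi)⟩
  rw [tsub_lt_iff_right (Nat.one_le_iff_ne_zero.mpr (p.parts_pos hi).ne')]
  exact lt_of_le_of_lt this h

/-- The key proof idea for the partition theorem, showing that the generating functions for both
sequences are ultimately the same (since the factor converges to 0 as m tends to infinity).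
It's enough to not take the limit though, and just consider large enough `m`.
-/
theorem same_gf [Field α] (m : ℕ) :
    (partialOddGF m * (range m).prod fun i => 1 - (X : PowerSeries α) ^ (m + i + 1)) =
      partialDistinctGF m := by
  rw [partialOddGF, partialDistinctGF]
  induction' m with m ih
  · simp
  set! π₀ : PowerSeries α := ∏ i ∈ range m, (1 - X ^ (m + 1 + i + 1)) with hπ₀
  set! π₁ : PowerSeries α := ∏ i ∈ range m, (1 - X ^ (2 * i + 1))⁻¹ with hπ₁
  set! π₂ : PowerSeries α := ∏ i ∈ range m, (1 - X ^ (m + i + 1)) with hπ₂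
  set! π₃ : PowerSeries α := ∏ i ∈ range m, (1 + X ^ (i + 1)) with hπ₃
  rw [← hπ₃] at ih
  have h : constantCoeff (1 - (X : PowerSeries α) ^ (2 * m + 1)) ≠ 0 := by
    rw [RingHom.map_sub, RingHom.map_pow, constantCoeff_one, constantCoeff_X,
      zero_pow (2 * m).succ_ne_zero, sub_zero]
    exact one_ne_zero
  calc
    (∏ i ∈ range (m + 1), (1 - X ^ (2 * i + 1))⁻¹) *
          ∏ i ∈ range (m + 1), (1 - X ^ (m + 1 + i + 1)) =
        π₁ * (1 - X ^ (2 * m + 1))⁻¹ * (π₀ * (1 - X ^ (m + 1 + m + 1))) := by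
      rw [prod_range_succ _ m, ← hπ₁, prod_range_succ _ m, ← hπ₀]
    _ = π₁ * (1 - X ^ (2 * m + 1))⁻¹ * (π₀ * ((1 + X ^ (m + 1)) * (1 - X ^ (m + 1)))) := by
      rw [← sq_sub_sq, one_pow, add_assoc _ m 1, ← two_mul (m + 1), pow_mul']
    _ = π₀ * (1 - X ^ (m + 1)) * (1 - X ^ (2 * m + 1))⁻¹ * (π₁ * (1 + X ^ (m + 1))) := by ring
    _ =
        (∏ i ∈ range (m + 1), (1 - X ^ (m + 1 + i))) * (1 - X ^ (2 * m + 1))⁻¹ *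
          (π₁ * (1 + X ^ (m + 1))) := by
      rw [prod_range_succ', add_zero, hπ₀]; simp_rw [← add_assoc]
    _ = π₂ * (1 - X ^ (m + 1 + m)) * (1 - X ^ (2 * m + 1))⁻¹ * (π₁ * (1 + X ^ (m + 1))) := by
      rw [add_right_comm, hπ₂, ← prod_range_succ]; simp_rw [add_right_comm]
    _ = π₂ * (1 - X ^ (2 * m + 1)) * (1 - X ^ (2 * m + 1))⁻¹ * (π₁ * (1 + X ^ (m + 1))) := by
      rw [two_mul, add_right_comm _ m 1]
    _ = (1 - X ^ (2 * m + 1)) * (1 - X ^ (2 * m + 1))⁻¹ * π₂ * (π₁ * (1 + X ^ (m + 1))) := by ring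
    _ = π₂ * (π₁ * (1 + X ^ (m + 1))) := by rw [PowerSeries.mul_inv_cancel _ h, one_mul]
    _ = π₁ * π₂ * (1 + X ^ (m + 1)) := by ring
    _ = π₃ * (1 + X ^ (m + 1)) := by rw [ih]
    _ = _ := by rw [prod_range_succ]

theorem same_coeffs [Field α] (m n : ℕ) (h : n ≤ m) :
    coeff n (partialOddGF m : PowerSeries α) = coeff n (partialDistinctGF m : PowerSeries α) := by
  rw [← same_gf, coeff_mul_prod_one_sub_of_lt_order]
  rintro i -
  rw [order_X_pow]
  exact mod_cast Nat.lt_succ_of_le (le_add_right h)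

theorem partition_theorem (n : ℕ) : #(Nat.Partition.odds n) = #(Nat.Partition.distincts n) := by
  suffices (#(Nat.Partition.odds n) : ℚ) = #(Nat.Partition.distincts n) from
    mod_cast this
  rw [distinctGF_prop n (n + 1) (by linarith)]
  rw [oddGF_prop n (n + 1) (by linarith)]
  apply same_coeffs (n + 1) n n.le_succ

end

end Theorems100

namespace CSBAux


def r : ℕ × ℕ → ℕ × ℕ → Prop := fun p q => p.1 < q.1 ∨ (p.1 = q.1 ∧ q.2 ≤ p.2)

instance : DecidableRel r := fun p q => by unfold r; infer_instance
instance : IsTrans (ℕ × ℕ) r := ⟨by intro a b c hab hbc; unfold r at *; omega⟩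
instance : IsAntisymm (ℕ × ℕ) r := ⟨by
  intro a b hab hba
  unfold r at *
  exact Prod.ext (by omega) (by omega)⟩
instance : IsTotal (ℕ × ℕ) r := ⟨by intro a b; unfold r; omega⟩

theorem zip_fst_snd {α β : Type*} : ∀ (l : List (α × β)),
    (l.map Prod.fst).zip (l.map Prod.snd) = l
  | [] => rfl
  | (a, b) :: l => by simp [zip_fst_snd l]

/-- sortedness of the zip of a sorted parts list with colors decreasing on equal parts -/
theorem zip_sorted (lam col : List ℕ) (hlen : col.length = lam.length)
    (hmono : lam.Pairwise (· ≤ ·))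
    (hdec : ∀ i : ℕ, i + 1 < lam.length →
      lam.getD i 0 = lam.getD (i+1) 0 → col.getD (i+1) 0 ≤ col.getD i 0) :
    (lam.zip col).Pairwise r := by
  have hlenz : (lam.zip col).length = lam.length := by
    rw [List.length_zip, hlen, Nat.min_self]
  rw [List.pairwise_iff_get]
  intro i j hij
  have hjl : (j : ℕ) < lam.length := hlenz ▸ j.isLt
  have hil : (i : ℕ) < lam.length := hlenz ▸ i.isLt
  have hgeti : (lam.zip col).get i = (lam[(i:ℕ)], col[(i:ℕ)]'(hlen ▸ hil)) := by
    simp [List.get_eq_getElem, List.getElem_zip]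
  have hgetj : (lam.zip col).get j = (lam[(j:ℕ)], col[(j:ℕ)]'(hlen ▸ hjl)) := by
    simp [List.get_eq_getElem, List.getElem_zip]
  rw [hgeti, hgetj]
  -- parts are monotone
  have hle : lam[(i:ℕ)] ≤ lam[(j:ℕ)] := by
    have := hmono.rel_get_of_lt (a := ⟨i, hil⟩) (b := ⟨j, hjl⟩) (by exact hij)
    simpa using this
  rcases Nat.lt_or_ge lam[(i:ℕ)] lam[(j:ℕ)] with h | h
  · exact Or.inl h
  · have heq : lam[(i:ℕ)] = lam[(j:ℕ)] := le_antisymm hle h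
    refine Or.inr ⟨heq, ?_⟩
    -- all parts between i and j are equal; colors decrease stepwise
    have key : ∀ k : ℕ, (i:ℕ) ≤ k → (hk : k < lam.length) → lam[k] = lam[(i:ℕ)] →
        col[k]'(hlen ▸ hk) ≤ col[(i:ℕ)]'(hlen ▸ hil) := by
      intro k
      induction k with
      | zero => intro h0 hk hlamk
                have h00 : (i:ℕ) = 0 := Nat.le_zero.mp h0
                simp only [h00, le_refl]
      | succ k ih =>
        intro hik hk hlamk
        rcases Nat.lt_or_ge (i:ℕ) (k+1) with hlt | hge
        · have hik' : (i:ℕ) ≤ k := Nat.lt_succ_iff.mp hlt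
          have hkl : k < lam.length := Nat.lt_of_succ_lt hk
          -- lam[k] = lam[i]
          have h1 : lam[(i:ℕ)] ≤ lam[k] := by
            rcases Nat.eq_or_lt_of_le hik' with he | hl
            · subst he; exact le_refl _
            · have := hmono.rel_get_of_lt (a := ⟨i, hil⟩) (b := ⟨k, hkl⟩) hl
              simpa using this
          have h2 : lam[k] ≤ lam[k+1] := by
            have := hmono.rel_get_of_lt (a := ⟨k, hkl⟩) (b := ⟨k+1, hk⟩) (by simp)
            simpa using this
          have hke : lam[k] = lam[(i:ℕ)] := by omega
          have hstep := hdec k hk (by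
            rw [List.getD_eq_getElem _ _ hkl, List.getD_eq_getElem _ _ hk]; omega)
          rw [List.getD_eq_getElem _ _ (hlen ▸ hk), List.getD_eq_getElem _ _ (hlen ▸ hkl)] at hstep
          exact le_trans hstep (ih hik' hkl hke)
        · have h00 : (i:ℕ) = k+1 := by omega
          simp only [h00]; exact le_refl _
    exact key j (le_of_lt hij) hjl heq.symm


def P1 (m n : ℕ) : Type :=
  {q : Multiset (ℕ × ℕ) × Multiset ℕ //
    (∀ p ∈ q.1, 0 < p.1 ∧ 1 ≤ p.2 ∧ p.2 ≤ 2*m ∧ (p.1 + p.2) % 2 = 1) ∧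
    (∀ a ∈ q.2, Odd a) ∧ (q.1.map Prod.fst).sum + q.2.sum = n}

def toP1 (m n : ℕ) (p : TildeP (2*m+1) n) : P1 m n := by
  refine ⟨(((p.1.lam.zip p.1.col : List (ℕ × ℕ)) : Multiset (ℕ × ℕ)), p.1.mu), ?_, p.2.2, ?_⟩
  · intro x hx
    rw [Multiset.mem_coe, List.mem_iff_get] at hx
    obtain ⟨i, hi⟩ := hx
    have hi1 : (i : ℕ) < p.1.lam.length := by
      simpa [List.length_zip, p.1.col_len] using i.isLt
    have hi2 : (i : ℕ) < p.1.col.length := by rw [p.1.col_len]; exact hi1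
    have hget : x = (p.1.lam[(i:ℕ)], p.1.col[(i:ℕ)]) := by
      rw [← hi]; simp [List.get_eq_getElem, List.getElem_zip]
    have hpos := p.1.lam_pos _ (List.getElem_mem hi1)
    have hrange := p.1.col_range _ (List.getElem_mem hi2)
    have hpar := p.2.1 i hi1
    rw [List.getD_eq_getElem _ _ hi1, List.getD_eq_getElem _ _ hi2] at hpar
    rw [hget]
    refine ⟨hpos, ?_, ?_, hpar⟩ <;> omega
  · have hmap : (p.1.lam.zip p.1.col).map Prod.fst = p.1.lam :=
      List.map_fst_zip (by rw [p.1.col_len])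
    rw [show ((((p.1.lam.zip p.1.col : List (ℕ × ℕ)) : Multiset (ℕ × ℕ)).map Prod.fst).sum)
          = ((p.1.lam.zip p.1.col).map Prod.fst).sum from rfl, hmap]
    exact p.1.total

def ofP1 (m n : ℕ) (q : P1 m n) : TildeP (2*m+1) n := by
  refine ⟨{ lam := (q.1.1.sort r).map Prod.fst
            col := (q.1.1.sort r).map Prod.snd
            mu := q.1.2
            col_len := by rw [List.length_map, List.length_map]
            lam_pos := ?_
            lam_mono := ?_
            col_range := ?_
            col_dec := ?_
            mu_pos := ?_
            total := ?_ }, ?_, q.2.2.1⟩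
  · intro a ha
    obtain ⟨x, hx, rfl⟩ := List.mem_map.mp ha
    exact (q.2.1 x (Multiset.mem_sort r |>.mp hx)).1
  · exact List.Pairwise.map _ (fun a b hab => by unfold r at hab; omega)
      (Multiset.pairwise_sort q.1.1 r)
  · intro x hx
    obtain ⟨p, hp, rfl⟩ := List.mem_map.mp hx
    have := q.2.1 p (Multiset.mem_sort r |>.mp hp)
    constructor <;> omega
  · intro i hi
    rw [List.length_map] at hi
    have hi' : i < (q.1.1.sort r).length := Nat.lt_of_succ_lt hi
    have hr := (List.pairwise_iff_get.mp (Multiset.pairwise_sort q.1.1 r)) ⟨i, hi'⟩ ⟨i+1, hi⟩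
      (by simp [Fin.lt_def])
    simp only [List.get_eq_getElem] at hr
    rw [List.getD_eq_getElem _ _ (by simpa using hi'), List.getD_eq_getElem _ _ (by simpa using hi),
        List.getD_eq_getElem _ _ (by simpa using hi), List.getD_eq_getElem _ _ (by simpa using hi')]
    simp only [List.getElem_map]
    intro heq
    have hr2 : (q.1.1.sort r)[i].1 < (q.1.1.sort r)[i+1].1 ∨
        ((q.1.1.sort r)[i].1 = (q.1.1.sort r)[i+1].1 ∧
          (q.1.1.sort r)[i+1].2 ≤ (q.1.1.sort r)[i].2) := hr
    omega
  · intro a ha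
    have := q.2.2.1 a ha
    exact this.pos
  · have : (((q.1.1.sort r).map Prod.fst : List ℕ) : Multiset ℕ).sum
        = (q.1.1.map Prod.fst).sum := by
      rw [show (((q.1.1.sort r).map Prod.fst : List ℕ) : Multiset ℕ)
            = (((q.1.1.sort r) : List (ℕ × ℕ)) : Multiset (ℕ × ℕ)).map Prod.fst from rfl,
          Multiset.sort_eq]
    rw [show ((q.1.1.sort r).map Prod.fst).sum
          = (((q.1.1.sort r).map Prod.fst : List ℕ) : Multiset ℕ).sum from
        (Multiset.sum_coe _).symm, this]
    exact q.2.2.2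
  · intro i hi
    rw [List.length_map] at hi
    rw [List.getD_eq_getElem _ _ (by simpa using hi), List.getD_eq_getElem _ _ (by simpa using hi)]
    simp only [List.getElem_map]
    have hmem : (q.1.1.sort r)[i] ∈ q.1.1 := (Multiset.mem_sort r).mp (List.getElem_mem _)
    have := q.2.1 _ hmem
    omega

def equivA (m n : ℕ) : TildeP (2*m+1) n ≃ P1 m n where
  toFun := toP1 m n
  invFun := ofP1 m n
  left_inv := fun p => by
    obtain ⟨⟨lam, col, mu, hcl, hlp, hlm, hcr, hcd, hmp, ht⟩, hp⟩ := p
    apply Subtype.ext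
    have hsorted : (lam.zip col).Pairwise r := zip_sorted lam col hcl hlm hcd
    have hperm : (Multiset.sort (↑(lam.zip col) : Multiset (ℕ × ℕ)) r).Perm (lam.zip col) :=
      Multiset.coe_eq_coe.mp (Multiset.sort_eq _ r)
    have hsort : Multiset.sort (↑(lam.zip col) : Multiset (ℕ × ℕ)) r = lam.zip col :=
      hperm.eq_of_pairwise' (Multiset.pairwise_sort _ r) hsorted
    show ColoredSemiBipartition.mk _ _ _ _ _ _ _ _ _ _ = _
    simp only [ColoredSemiBipartition.mk.injEq]
    refine ⟨?_, ?_, rfl⟩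
    · show (Multiset.sort (↑(lam.zip col) : Multiset (ℕ × ℕ)) r).map Prod.fst = lam
      rw [hsort]
      exact List.map_fst_zip hcl.ge
    · show (Multiset.sort (↑(lam.zip col) : Multiset (ℕ × ℕ)) r).map Prod.snd = col
      rw [hsort]
      exact List.map_snd_zip hcl.le
  right_inv := fun q => by
    obtain ⟨⟨s, mu⟩, hq⟩ := q
    apply Subtype.ext
    show ((((((s.sort r).map Prod.fst).zip ((s.sort r).map Prod.snd)) : List (ℕ × ℕ)) :
        Multiset (ℕ × ℕ)), mu) = (s, mu)
    rw [zip_fst_snd, Multiset.sort_eq]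

def P2 (m n : ℕ) : Type :=
  {q : (Fin m → Multiset ℕ) × Multiset ℕ //
    (∀ k, ∀ a ∈ q.1 k, 0 < a) ∧ (∀ a ∈ q.2, Odd a) ∧ (∑ k, (q.1 k).sum) + q.2.sum = n}

def lab (p : ℕ × ℕ) : ℕ := (p.2 - 1) / 2
def glue (k : ℕ) (v : ℕ) : ℕ × ℕ := (v, 2 * k + 1 + v % 2)

theorem lab_glue (k v : ℕ) : lab (glue k v) = k := by unfold lab glue; simp only; omega

theorem fst_glue (k : ℕ) : Prod.fst ∘ glue k = id := funext fun v => rfl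

def toF (m : ℕ) (s : Multiset (ℕ × ℕ)) : Fin m → Multiset ℕ :=
  fun k => (s.filter (fun p => lab p = k.val)).map Prod.fst

def toM (m : ℕ) (f : Fin m → Multiset ℕ) : Multiset (ℕ × ℕ) :=
  ∑ k : Fin m, (f k).map (glue k.val)

/-- `F t = (t.map Prod.fst).sum` as an additive hom. -/
def F : Multiset (ℕ × ℕ) →+ ℕ where
  toFun := fun t => (t.map Prod.fst).sum
  map_zero' := rfl
  map_add' := fun s t => by
    show ((s + t).map Prod.fst).sum = (s.map Prod.fst).sum + (t.map Prod.fst).sum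
    rw [Multiset.map_add, Multiset.sum_add]

theorem F_apply (t : Multiset (ℕ × ℕ)) : F t = (t.map Prod.fst).sum := rfl

/-- filtering as an additive hom -/
def filterHom (p : ℕ × ℕ → Prop) [DecidablePred p] : Multiset (ℕ × ℕ) →+ Multiset (ℕ × ℕ) where
  toFun := Multiset.filter p
  map_zero' := rfl
  map_add' := fun s t => Multiset.filter_add p s t

theorem sum_filter_lab (m : ℕ) (s : Multiset (ℕ × ℕ)) (h : ∀ p ∈ s, lab p < m) :
    ∑ k : Fin m, s.filter (fun p => lab p = k.val) = s := by
  induction s using Multiset.induction with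
  | empty => simp
  | cons a s ih =>
    have ha : lab a < m := h a (Multiset.mem_cons_self a s)
    simp only [Multiset.filter_cons]
    rw [Finset.sum_add_distrib, ih (fun p hp => h p (Multiset.mem_cons_of_mem hp))]
    have : ∀ k : Fin m, (if lab a = k.val then ({a} : Multiset (ℕ × ℕ)) else 0)
        = if k = ⟨lab a, ha⟩ then ({a} : Multiset (ℕ × ℕ)) else 0 := by
      intro k
      refine if_congr ?_ rfl rfl
      constructor
      · intro hh; exact Fin.ext hh.symm
      · intro hh; rw [hh]
    rw [Finset.sum_congr rfl (fun k _ => this k)]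
    simp [Multiset.singleton_add]

theorem toM_toF (m : ℕ) (s : Multiset (ℕ × ℕ))
    (h : ∀ p ∈ s, 1 ≤ p.2 ∧ p.2 ≤ 2*m ∧ (p.1 + p.2) % 2 = 1) :
    toM m (toF m s) = s := by
  unfold toM toF
  have key : ∀ k : Fin m, ((s.filter (fun p => lab p = k.val)).map Prod.fst).map (glue k.val)
      = s.filter (fun p => lab p = k.val) := by
    intro k
    rw [Multiset.map_map]
    have : ∀ p ∈ s.filter (fun p => lab p = k.val), (glue k.val ∘ Prod.fst) p = id p := by
      intro p hp
      rw [Multiset.mem_filter] at hp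
      obtain ⟨hps, hpl⟩ := hp
      have hc := h p hps
      have : glue k.val p.1 = p := by
        unfold glue
        have : 2 * k.val + 1 + p.1 % 2 = p.2 := by unfold lab at hpl; omega
        rw [this]
      exact this
    rw [Multiset.map_congr rfl this, Multiset.map_id]
  rw [Finset.sum_congr rfl (fun k _ => key k)]
  exact sum_filter_lab m s (fun p hp => by have := h p hp; unfold lab; omega)

theorem toF_toM (m : ℕ) (f : Fin m → Multiset ℕ) : toF m (toM m f) = f := by
  funext k
  unfold toF toM
  have hfil : Multiset.filter (fun p => lab p = k.val) (∑ j : Fin m, (f j).map (glue j.val))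
      = ∑ j : Fin m, Multiset.filter (fun p => lab p = k.val) ((f j).map (glue j.val)) :=
    map_sum (filterHom (fun p => lab p = k.val)) _ _
  rw [hfil]
  have key : ∀ j : Fin m, Multiset.filter (fun p => lab p = k.val) ((f j).map (glue j.val))
      = if j = k then (f k).map (glue k.val) else 0 := by
    intro j
    rw [Multiset.filter_map]
    by_cases hjk : j = k
    · subst hjk
      rw [if_pos rfl, Multiset.filter_eq_self.mpr]
      intro v _
      show lab (glue j.val v) = j.val
      exact lab_glue _ _
    · rw [if_neg hjk, Multiset.filter_eq_nil.mpr, Multiset.map_zero]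
      intro v _
      show ¬ lab (glue j.val v) = k.val
      rw [lab_glue]
      exact fun hh => hjk (Fin.ext hh)
  rw [Finset.sum_congr rfl (fun j _ => key j), Finset.sum_ite_eq' Finset.univ k
    (fun _ => (f k).map (glue k.val)), if_pos (Finset.mem_univ k), Multiset.map_map,
    fst_glue, Multiset.map_id]

theorem F_toM (m : ℕ) (f : Fin m → Multiset ℕ) : F (toM m f) = ∑ k, (f k).sum := by
  unfold toM
  rw [map_sum F]
  refine Finset.sum_congr rfl (fun k _ => ?_)
  rw [F_apply, Multiset.map_map, fst_glue, Multiset.map_id]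

def equivB (m n : ℕ) : P1 m n ≃ P2 m n where
  toFun := fun q => by
    refine ⟨(toF m q.1.1, q.1.2), ?_, q.2.2.1, ?_⟩
    · intro k a ha
      unfold toF at ha
      obtain ⟨p, hp, rfl⟩ := Multiset.mem_map.mp ha
      exact (q.2.1 p (Multiset.mem_filter.mp hp).1).1
    · have hFs : ∑ k, (toF m q.1.1 k).sum = F q.1.1 := by
        have : ∀ k : Fin m, (toF m q.1.1 k).sum
            = F (q.1.1.filter (fun p => lab p = k.val)) := fun k => rfl
        rw [Finset.sum_congr rfl (fun k _ => this k), ← map_sum F,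
          sum_filter_lab m q.1.1 (fun p hp => by have := q.2.1 p hp; unfold lab; omega)]
      rw [hFs]
      exact q.2.2.2
  invFun := fun q => by
    refine ⟨(toM m q.1.1, q.1.2), ?_, q.2.2.1, ?_⟩
    · intro p hp
      have hp' : p ∈ ∑ k : Fin m, ((q.1.1 k).map (glue k.val)) := hp
      obtain ⟨k, -, hk⟩ := Multiset.mem_sum.mp hp'
      obtain ⟨v, hv, rfl⟩ := Multiset.mem_map.mp hk
      have hpos := q.2.1 k v hv
      have hk2 := k.isLt
      unfold glue
      refine ⟨hpos, ?_, ?_, ?_⟩ <;> simp only <;> omega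
    · show ((toM m q.1.1).map Prod.fst).sum + q.1.2.sum = n
      rw [← F_apply, F_toM]
      exact q.2.2.2
  left_inv := fun q => by
    apply Subtype.ext
    show (toM m (toF m q.1.1), q.1.2) = q.1
    rw [toM_toF m q.1.1 (fun p hp => (q.2.1 p hp).2)]
  right_inv := fun q => by
    apply Subtype.ext
    show (toF m (toM m q.1.1), q.1.2) = q.1
    rw [toF_toM]

def OddP (a : ℕ) : Type := {s : Multiset ℕ // (∀ x ∈ s, Odd x) ∧ s.sum = a}

def StrictP (a : ℕ) : Type := {s : Multiset ℕ // s.Nodup ∧ (∀ x ∈ s, 0 < x) ∧ s.sum = a}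

def equivC (m n : ℕ) : P2 m n ≃ Σ a : Fin (n+1), OddP a.val × MultiPartition m (n - a.val) where
  toFun := fun ⟨(f, mu), hpos, hodd, hsum⟩ =>
    ⟨⟨mu.sum, by
        have h : (∑ i, (f i).sum) + mu.sum = n := hsum
        omega⟩, ⟨mu, hodd, rfl⟩,
      ⟨f, hpos, show ∑ i, (f i).sum = n - mu.sum by
        have h : (∑ i, (f i).sum) + mu.sum = n := hsum
        omega⟩⟩
  invFun := fun ⟨⟨a, ha⟩, ⟨mu, hmu1, hmu2⟩, ⟨f, hf1, hf2⟩⟩ =>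
    ⟨(f, mu), hf1, hmu1, by
      have hmu2' : mu.sum = a := hmu2
      have hf2' : ∑ i, (f i).sum = n - a := hf2
      show (∑ i, (f i).sum) + mu.sum = n
      omega⟩
  left_inv := fun ⟨(f, mu), hpos, hodd, hsum⟩ => rfl
  right_inv := fun ⟨⟨a, ha⟩, ⟨mu, hmu1, hmu2⟩, ⟨f, hf1, hf2⟩⟩ => by
    have h : mu.sum = a := hmu2
    subst h
    rfl

def equivD (m n : ℕ) :
    StrictTimesMulti m n ≃ Σ a : Fin (n+1), StrictP a.val × MultiPartition m (n - a.val) where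
  toFun := fun ⟨(s, f), hnd, hsp, hfp, hsum⟩ =>
    ⟨⟨s.sum, by
        have h : s.sum + ∑ i, (f i).sum = n := hsum
        omega⟩, ⟨s, hnd, hsp, rfl⟩,
      ⟨f, hfp, show ∑ i, (f i).sum = n - s.sum by
        have h : s.sum + ∑ i, (f i).sum = n := hsum
        omega⟩⟩
  invFun := fun ⟨⟨a, ha⟩, ⟨s, hs1, hs2, hs3⟩, ⟨f, hf1, hf2⟩⟩ =>
    ⟨(s, f), hs1, hs2, hf1, by
      have hs3' : s.sum = a := hs3
      have hf2' : ∑ i, (f i).sum = n - a := hf2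
      show s.sum + ∑ i, (f i).sum = n
      omega⟩
  left_inv := fun ⟨(s, f), hnd, hsp, hfp, hsum⟩ => rfl
  right_inv := fun ⟨⟨a, ha⟩, ⟨s, hs1, hs2, hs3⟩, ⟨f, hf1, hf2⟩⟩ => by
    have h : s.sum = a := hs3
    subst h
    rfl

def oddPEquivOdds (a : ℕ) : OddP a ≃ {p : Nat.Partition a // p ∈ Nat.Partition.odds a} where
  toFun := fun s => ⟨⟨s.1, fun {i} hi => (s.2.1 i hi).pos, s.2.2⟩, by
    rw [Nat.Partition.odds, Nat.Partition.restricted, Finset.mem_filter]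
    exact ⟨Finset.mem_univ _, fun i hi => (Nat.not_even_iff_odd).mpr (s.2.1 i hi)⟩⟩
  invFun := fun p => ⟨p.1.parts, fun i hi => by
    have := (Finset.mem_filter.mp p.2).2 i hi
    exact Nat.not_even_iff_odd.mp this, p.1.parts_sum⟩
  left_inv := fun s => by apply Subtype.ext; rfl
  right_inv := fun p => by apply Subtype.ext; rfl

def strictPEquivDistincts (a : ℕ) :
    StrictP a ≃ {p : Nat.Partition a // p ∈ Nat.Partition.distincts a} where
  toFun := fun s => ⟨⟨s.1, fun {i} hi => s.2.2.1 i hi, s.2.2.2⟩, by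
    rw [Nat.Partition.distincts, Finset.mem_filter]
    exact ⟨Finset.mem_univ _, s.2.1⟩⟩
  invFun := fun p => ⟨p.1.parts, (Finset.mem_filter.mp p.2).2,
    fun x hx => p.1.parts_pos hx, p.1.parts_sum⟩
  left_inv := fun s => by apply Subtype.ext; rfl
  right_inv := fun p => by apply Subtype.ext; rfl

theorem oddP_nonempty_equiv_strictP (a : ℕ) : Nonempty (OddP a ≃ StrictP a) := by
  have hcard : Fintype.card {p : Nat.Partition a // p ∈ Nat.Partition.odds a}
      = Fintype.card {p : Nat.Partition a // p ∈ Nat.Partition.distincts a} := by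
    rw [Fintype.card_coe, Fintype.card_coe]
    exact Theorems100.partition_theorem a
  obtain ⟨e⟩ := Fintype.card_eq.mp hcard
  exact ⟨((oddPEquivOdds a).trans e).trans (strictPEquivDistincts a).symm⟩

end CSBAux
/-- For `d = 2m+1` odd, the set of colored semi-bipartitions `(λ, μ)` of `n`
with `λ_i + c(i)` odd for all `i` and `μ` an odd partition is in bijection with
`⊔_{a=0}^{n} (strict partitions of a) × (m-multipartitions of n-a)`, i.e. with
pairs of a strict partition and an `m`-multipartition of total size `n`. -/
theorem colored_semibipartitions_biject_strict_times_multipartitions_odd_level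
    (m n : ℕ) : Nonempty (TildeP (2 * m + 1) n ≃ StrictTimesMulti m n) := by
  have e : ∀ a : ℕ, CSBAux.OddP a ≃ CSBAux.StrictP a :=
    fun a => Classical.choice (CSBAux.oddP_nonempty_equiv_strictP a)
  exact ⟨((CSBAux.equivA m n).trans (CSBAux.equivB m n)).trans
    ((CSBAux.equivC m n).trans
      ((Equiv.sigmaCongrRight (fun a : Fin (n+1) => Equiv.prodCongr (e a.val) (Equiv.refl (MultiPartition m (n - a.val))))).trans
        (CSBAux.equivD m n).symm))⟩
end
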